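/- arXiv:1912.01579 — 6 statements merged into one kernel-verified Lean document; each statement's English description precedes it below -/
import Mathlib

section
/- Let (X,d) be a complete separable metric space and let μ₀, μ₁ be Borel probability measures on X with finite second moments. If σ is a transport plan between μ₀ and μ₁ that is concentrated on a c-cyclically monotone set (with cost c = d²) and has finite cost, then σ is an optimal transport plan for the quadratic cost. -/
open MeasureTheory ENNReal

/-- A set `Γ ⊆ X × X` is c-cyclically monotone for the cost `c = d²`. -/
def CyclicallyMonotone {X : Type*} [MetricSpace X] (Γ : Set (X × X)) : Prop :=
  ∀ (n : ℕ) (p : Fin n → X × X), (∀ i, p i ∈ Γ) →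
    ∀ τ : Equiv.Perm (Fin n),
      ∑ i, dist (p i).1 (p i).2 ^ 2 ≤ ∑ i, dist (p i).1 (p (τ i)).2 ^ 2

/-- A transport plan between `μ₀` and `μ₁`: a Borel probability measure on `X × X`
with marginals `μ₀` and `μ₁`. -/
def IsTransportPlan {X : Type*} [MetricSpace X] [MeasurableSpace X]
    (μ₀ μ₁ : Measure X) (σ : Measure (X × X)) : Prop :=
  IsProbabilityMeasure σ ∧ σ.map Prod.fst = μ₀ ∧ σ.map Prod.snd = μ₁

/-- The quadratic transport cost of a plan. -/
noncomputable def transportCost {X : Type*} [MetricSpace X] [MeasurableSpace X]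
    (σ : Measure (X × X)) : ℝ≥0∞ :=
  ∫⁻ p, ENNReal.ofReal (dist p.1 p.2 ^ 2) ∂σ

/-- A measure `μ` has finite second moment. -/
def FiniteSecondMoment {X : Type*} [MetricSpace X] [MeasurableSpace X]
    (μ : Measure X) : Prop :=
  ∃ x₀ : X, ∫⁻ x, ENNReal.ofReal (dist x x₀ ^ 2) ∂μ < ∞

namespace OTAux

variable {X : Type*} [MetricSpace X]

/-- cost -/
noncomputable def c (x y : X) : ℝ := dist x y ^ 2

lemma c_nonneg (x y : X) : 0 ≤ c x y := sq_nonneg _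

lemma c_continuous_left (y : X) : Continuous fun x => c x y := by
  unfold c; fun_prop

lemma c_continuous_right (x : X) : Continuous fun y => c x y := by
  unfold c; fun_prop

/-- A finite chain in `Γ` starting at `a`. -/
structure Chain (Γ : Set (X × X)) (a : X × X) where
  n : ℕ
  p : Fin (n + 1) → X × X
  mem : ∀ i, p i ∈ Γ
  first : p 0 = a

variable {Γ : Set (X × X)} {a : X × X}

/-- The value associated to a chain and an endpoint `x`. -/
noncomputable def Chain.val (ch : Chain Γ a) (x : X) : ℝ :=
  (∑ i : Fin ch.n,
      (c (ch.p i.succ).1 (ch.p i.castSucc).2 - c (ch.p i.castSucc).1 (ch.p i.castSucc).2))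
  + (c x (ch.p (Fin.last ch.n)).2 - c (ch.p (Fin.last ch.n)).1 (ch.p (Fin.last ch.n)).2)

lemma Chain.val_continuous (ch : Chain Γ a) : Continuous ch.val := by
  unfold Chain.val
  exact continuous_const.add ((c_continuous_left _).sub continuous_const)

/-- The trivial chain. -/
def Chain.triv (ha : a ∈ Γ) : Chain Γ a := ⟨0, fun _ => a, fun _ => ha, rfl⟩

lemma Chain.val_triv (ha : a ∈ Γ) (x : X) :
    (Chain.triv ha).val x = c x a.2 - c a.1 a.2 := by
  simp [Chain.val, Chain.triv]

/-- Extension of a chain by an element of `Γ`. -/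
def Chain.ext (ch : Chain Γ a) {q : X × X} (hq : q ∈ Γ) : Chain Γ a where
  n := ch.n + 1
  p := Fin.snoc ch.p q
  mem := fun i => by
    induction i using Fin.lastCases with
    | last => rw [Fin.snoc_last]; exact hq
    | cast j => rw [Fin.snoc_castSucc]; exact ch.mem j
  first := by
    have : (0 : Fin (ch.n + 2)) = Fin.castSucc 0 := rfl
    rw [this, Fin.snoc_castSucc]; exact ch.first

lemma Chain.val_ext (ch : Chain Γ a) {q : X × X} (hq : q ∈ Γ) (x : X) :
    (ch.ext hq).val x = ch.val q.1 + (c x q.2 - c q.1 q.2) := by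
  show (∑ i : Fin (ch.n + 1),
      (c ((Fin.snoc ch.p q : Fin (ch.n + 2) → X × X) i.succ).1
          ((Fin.snoc ch.p q : Fin (ch.n + 2) → X × X) i.castSucc).2 -
        c ((Fin.snoc ch.p q : Fin (ch.n + 2) → X × X) i.castSucc).1
          ((Fin.snoc ch.p q : Fin (ch.n + 2) → X × X) i.castSucc).2))
    + (c x ((Fin.snoc ch.p q : Fin (ch.n + 2) → X × X) (Fin.last (ch.n + 1))).2 -
        c ((Fin.snoc ch.p q : Fin (ch.n + 2) → X × X) (Fin.last (ch.n + 1))).1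
          ((Fin.snoc ch.p q : Fin (ch.n + 2) → X × X) (Fin.last (ch.n + 1))).2) = _
  rw [Fin.sum_univ_castSucc]
  have h1 : ∀ j : Fin ch.n,
      (Fin.snoc ch.p q : Fin (ch.n + 2) → X × X) (Fin.castSucc j).succ = ch.p j.succ := by
    intro j; rw [Fin.succ_castSucc, Fin.snoc_castSucc]
  have h2 : ∀ j : Fin (ch.n + 1),
      (Fin.snoc ch.p q : Fin (ch.n + 2) → X × X) (Fin.castSucc j) = ch.p j :=
    fun j => Fin.snoc_castSucc _ _ _
  have h3 : (Fin.snoc ch.p q : Fin (ch.n + 2) → X × X) (Fin.last ch.n).succ = q := by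
    rw [Fin.succ_last, Fin.snoc_last]
  have h4 : (Fin.snoc ch.p q : Fin (ch.n + 2) → X × X) (Fin.last (ch.n + 1)) = q :=
    Fin.snoc_last _ _
  simp only [h1, h2, h3, h4]
  ring_nf
  simp only [Chain.val]
  ring

/-- Chains have nonnegative value at the base point, by cyclic monotonicity. -/
lemma Chain.val_base_nonneg (hmono : CyclicallyMonotone Γ) (ch : Chain Γ a) :
    0 ≤ ch.val a.1 := by
  have key := hmono (ch.n + 1) ch.p ch.mem (finRotate (ch.n + 1)).symm
  have hτ0 : (finRotate (ch.n + 1)).symm 0 = Fin.last ch.n := by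
    rw [Equiv.symm_apply_eq, finRotate_last]
  have hτs : ∀ i : Fin ch.n, (finRotate (ch.n + 1)).symm i.succ = i.castSucc := by
    intro i
    rw [Equiv.symm_apply_eq, finRotate_succ_apply, Fin.coeSucc_eq_succ]
  rw [Fin.sum_univ_succ (fun i => dist (ch.p i).1 (ch.p ((finRotate (ch.n + 1)).symm i)).2 ^ 2)]
    at key
  simp only [hτ0, hτs] at key
  rw [Fin.sum_univ_castSucc (fun i => dist (ch.p i).1 (ch.p i).2 ^ 2)] at key
  unfold Chain.val c
  rw [Finset.sum_sub_distrib]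
  have hfirst : (ch.p 0).1 = a.1 := by rw [ch.first]
  rw [← hfirst]
  linarith

end OTAux

namespace OTAux
variable {X : Type*} [MetricSpace X]

variable (Γ : Set (X × X)) (a : X × X)

/-- The Kantorovich potential, as an extended-real-valued infimum over chains. -/
noncomputable def phi (x : X) : EReal := ⨅ ch : Chain Γ a, ((ch.val x : ℝ) : EReal)

/-- The conjugate potential. -/
noncomputable def psi (y : X) : EReal := ⨅ x : X, ((c x y : ℝ) : EReal) + (-(phi Γ a x))

variable {Γ a}

lemma phi_le_coe (ha : a ∈ Γ) (x : X) :
    phi Γ a x ≤ ((c x a.2 - c a.1 a.2 : ℝ) : EReal) := by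
  have := iInf_le (fun ch : Chain Γ a => ((ch.val x : ℝ) : EReal)) (Chain.triv ha)
  rwa [Chain.val_triv ha] at this

lemma phi_ne_top (ha : a ∈ Γ) (x : X) : phi Γ a x ≠ ⊤ :=
  ((phi_le_coe ha x).trans_lt (EReal.coe_lt_top _)).ne

lemma phi_base_nonneg (hmono : CyclicallyMonotone Γ) : 0 ≤ phi Γ a a.1 := by
  refine le_iInf fun ch => ?_
  rw [show ((0 : EReal)) = ((0 : ℝ) : EReal) by simp]
  exact EReal.coe_le_coe_iff.mpr (Chain.val_base_nonneg hmono ch)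

lemma phi_base (ha : a ∈ Γ) (hmono : CyclicallyMonotone Γ) : phi Γ a a.1 = 0 := by
  refine le_antisymm ?_ (phi_base_nonneg hmono)
  have := phi_le_coe ha a.1
  rwa [sub_self, EReal.coe_zero] at this

lemma phi_le_ext {q : X × X} (hq : q ∈ Γ) (ch : Chain Γ a) (x : X) :
    phi Γ a x ≤ ((ch.val q.1 + (c x q.2 - c q.1 q.2) : ℝ) : EReal) := by
  have := iInf_le (fun ch : Chain Γ a => ((ch.val x : ℝ) : EReal)) (ch.ext hq)
  rwa [Chain.val_ext ch hq x] at this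

lemma phi_lb (hmono : CyclicallyMonotone Γ) {q : X × X} (hq : q ∈ Γ) :
    ((c q.1 q.2 - c a.1 q.2 : ℝ) : EReal) ≤ phi Γ a q.1 := by
  refine le_iInf fun ch => ?_
  rw [EReal.coe_le_coe_iff]
  have h0 := Chain.val_base_nonneg hmono (ch.ext hq)
  rw [Chain.val_ext ch hq a.1] at h0
  linarith

lemma phi_ne_bot (hmono : CyclicallyMonotone Γ) {q : X × X} (hq : q ∈ Γ) :
    phi Γ a q.1 ≠ ⊥ :=
  ((EReal.bot_lt_coe _).trans_le (phi_lb hmono hq)).ne'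

lemma psi_le (x : X) (y : X) :
    psi Γ a y ≤ ((c x y : ℝ) : EReal) + (-(phi Γ a x)) :=
  iInf_le _ x

lemma psi_le_coe (ha : a ∈ Γ) (hmono : CyclicallyMonotone Γ) (y : X) :
    psi Γ a y ≤ ((c a.1 y : ℝ) : EReal) := by
  have := psi_le (Γ := Γ) (a := a) a.1 y
  rwa [phi_base ha hmono, neg_zero, add_zero] at this

lemma psi_ne_top (ha : a ∈ Γ) (hmono : CyclicallyMonotone Γ) (y : X) : psi Γ a y ≠ ⊤ :=
  ((psi_le_coe ha hmono y).trans_lt (EReal.coe_lt_top _)).ne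

/-- The duality inequality, valid everywhere. -/
lemma duality_le (ha : a ∈ Γ) (x y : X) :
    phi Γ a x + psi Γ a y ≤ ((c x y : ℝ) : EReal) := by
  refine le_trans (add_le_add_right (psi_le x y) _) ?_
  by_cases hb : phi Γ a x = ⊥
  · rw [hb, EReal.bot_add]; exact bot_le
  · have hr : ((phi Γ a x).toReal : EReal) = phi Γ a x :=
      EReal.coe_toReal (phi_ne_top ha x) hb
    rw [← hr, ← EReal.coe_neg, ← EReal.coe_add, ← EReal.coe_add]
    rw [EReal.coe_le_coe_iff]
    linarith

/-- On `Γ`, the duality inequality is an equality (≥ direction). -/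
lemma duality_ge (ha : a ∈ Γ) (hmono : CyclicallyMonotone Γ) {q : X × X} (hq : q ∈ Γ) :
    ((c q.1 q.2 : ℝ) : EReal) ≤ phi Γ a q.1 + psi Γ a q.2 := by
  have hbot := phi_ne_bot (a := a) hmono hq
  have htop := phi_ne_top ha q.1
  set r := (phi Γ a q.1).toReal with hrdef
  have hr : (r : EReal) = phi Γ a q.1 := EReal.coe_toReal htop hbot
  have hpsi : ((c q.1 q.2 - r : ℝ) : EReal) ≤ psi Γ a q.2 := by
    refine le_iInf fun x' => ?_
    by_cases hb' : phi Γ a x' = ⊥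
    · rw [hb', EReal.neg_bot, EReal.coe_add_top]; exact le_top
    · have hr' : ((phi Γ a x').toReal : EReal) = phi Γ a x' :=
        EReal.coe_toReal (phi_ne_top ha x') hb'
      set s := (phi Γ a x').toReal
      rw [← hr', ← EReal.coe_neg, ← EReal.coe_add, EReal.coe_le_coe_iff]
      -- need : c q.1 q.2 - r ≤ c x' q.2 + (-s), i.e. s ≤ r + c x' q.2 - c q.1 q.2
      have hs : ∀ ch : Chain Γ a, s - (c x' q.2 - c q.1 q.2) ≤ ch.val q.1 := by
        intro ch
        have := phi_le_ext hq ch x'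
        rw [← hr', EReal.coe_le_coe_iff] at this
        linarith
      have : ((s - (c x' q.2 - c q.1 q.2) : ℝ) : EReal) ≤ phi Γ a q.1 :=
        le_iInf fun ch => EReal.coe_le_coe_iff.mpr (hs ch)
      rw [← hr, EReal.coe_le_coe_iff] at this
      linarith
  calc ((c q.1 q.2 : ℝ) : EReal) = ((r : ℝ) : EReal) + ((c q.1 q.2 - r : ℝ) : EReal) := by
        rw [← EReal.coe_add]; norm_num
    _ ≤ ((r : ℝ) : EReal) + psi Γ a q.2 := add_le_add_right hpsi _
    _ = phi Γ a q.1 + psi Γ a q.2 := by rw [hr]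

lemma psi_ne_bot (ha : a ∈ Γ) (hmono : CyclicallyMonotone Γ) {q : X × X} (hq : q ∈ Γ) :
    psi Γ a q.2 ≠ ⊥ := by
  intro h
  have := duality_ge ha hmono hq
  rw [h, EReal.add_bot] at this
  exact (EReal.bot_lt_coe _).not_ge this

lemma measurable_phi [MeasurableSpace X] [BorelSpace X] :
    Measurable (phi Γ a) := by
  apply measurable_of_Iio
  intro b
  have heq : phi Γ a ⁻¹' Set.Iio b = ⋃ ch : Chain Γ a, {x | ((ch.val x : ℝ) : EReal) < b} := by
    ext x
    simp only [Set.mem_preimage, Set.mem_Iio, Set.mem_iUnion, Set.mem_setOf_eq, phi, iInf_lt_iff]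
  rw [heq]
  refine (isOpen_iUnion fun ch => ?_).measurableSet
  exact isOpen_Iio.preimage (continuous_coe_real_ereal.comp ch.val_continuous)

lemma measurable_psi (ha : a ∈ Γ) [MeasurableSpace X] [BorelSpace X] :
    Measurable (psi Γ a) := by
  apply measurable_of_Iio
  intro b
  have heq : psi Γ a ⁻¹' Set.Iio b =
      ⋃ x : X, {y | ((c x y : ℝ) : EReal) + (-(phi Γ a x)) < b} := by
    ext y
    simp only [Set.mem_preimage, Set.mem_Iio, Set.mem_iUnion, Set.mem_setOf_eq, psi, iInf_lt_iff]
  rw [heq]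
  refine (isOpen_iUnion fun x => ?_).measurableSet
  by_cases hb : phi Γ a x = ⊥
  · have : {y | ((c x y : ℝ) : EReal) + (-(phi Γ a x)) < b} = ∅ := by
      ext y
      simp [hb, EReal.neg_bot, EReal.coe_add_top]
    rw [this]; exact isOpen_empty
  · have hr : ((phi Γ a x).toReal : EReal) = phi Γ a x :=
      EReal.coe_toReal (phi_ne_top ha x) hb
    set s := (phi Γ a x).toReal
    have : {y | ((c x y : ℝ) : EReal) + (-(phi Γ a x)) < b} =
        (fun y => ((c x y + (-s) : ℝ) : EReal)) ⁻¹' Set.Iio b := by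
      ext y
      simp only [Set.mem_setOf_eq, Set.mem_preimage, Set.mem_Iio, ← hr,
        ← EReal.coe_neg, ← EReal.coe_add]
    rw [this]
    exact isOpen_Iio.preimage (continuous_coe_real_ereal.comp
      (((c_continuous_right x).add continuous_const)))

lemma FiniteSecondMoment.integrable [MeasurableSpace X] [BorelSpace X]
    {μ : Measure X} [IsProbabilityMeasure μ]
    (h : ∃ x₀ : X, ∫⁻ x, ENNReal.ofReal (dist x x₀ ^ 2) ∂μ < ∞) (z : X) :
    Integrable (fun x => dist x z ^ 2) μ := by
  obtain ⟨w, hw⟩ := h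
  have hb : ∀ x : X, dist x z ^ 2 ≤ 2 * dist x w ^ 2 + 2 * dist w z ^ 2 := by
    intro x
    have h1 : dist x z ≤ dist x w + dist w z := dist_triangle x w z
    have h2 : dist x z ^ 2 ≤ (dist x w + dist w z) ^ 2 := by
      apply pow_le_pow_left₀ dist_nonneg h1
    nlinarith [sq_nonneg (dist x w - dist w z)]
  have hmeas : Continuous fun x : X => dist x z ^ 2 := by fun_prop
  refine ⟨hmeas.aestronglyMeasurable, ?_⟩
  rw [hasFiniteIntegral_iff_ofReal (Filter.Eventually.of_forall fun x => sq_nonneg _)]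
  calc ∫⁻ x, ENNReal.ofReal (dist x z ^ 2) ∂μ
      ≤ ∫⁻ x, ENNReal.ofReal (2 * dist x w ^ 2 + 2 * dist w z ^ 2) ∂μ :=
        lintegral_mono fun x => ENNReal.ofReal_le_ofReal (hb x)
    _ ≤ ∫⁻ x, (ENNReal.ofReal (2 * dist x w ^ 2) + ENNReal.ofReal (2 * dist w z ^ 2)) ∂μ :=
        lintegral_mono fun x => ENNReal.ofReal_add_le
    _ = ∫⁻ x, ENNReal.ofReal (2 * dist x w ^ 2) ∂μ + ENNReal.ofReal (2 * dist w z ^ 2) := by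
        rw [lintegral_add_right _ measurable_const, lintegral_const, measure_univ, mul_one]
    _ < ∞ := by
        refine ENNReal.add_lt_top.mpr ⟨?_, ENNReal.ofReal_lt_top⟩
        have : ∀ x : X, ENNReal.ofReal (2 * dist x w ^ 2) =
            2 * ENNReal.ofReal (dist x w ^ 2) := by
          intro x
          rw [ENNReal.ofReal_mul (by norm_num)]
          norm_num
        simp_rw [this]
        rw [lintegral_const_mul _ (by fun_prop : Measurable fun x : X => ENNReal.ofReal (dist x w ^ 2))]
        exact ENNReal.mul_lt_top ofNat_lt_top hw

end OTAux


/-- in a complete separable metric space, a transport plan between two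
Borel probability measures with finite second moments that is concentrated on a
c-cyclically monotone set (for `c = d²`) and has finite cost is optimal for the
quadratic cost. -/
theorem stmt_0 {X : Type*} [MetricSpace X] [CompleteSpace X]
    [TopologicalSpace.SeparableSpace X] [MeasurableSpace X] [BorelSpace X]
    (μ₀ μ₁ : Measure X) [IsProbabilityMeasure μ₀] [IsProbabilityMeasure μ₁]
    (hμ₀ : FiniteSecondMoment μ₀) (hμ₁ : FiniteSecondMoment μ₁)
    (σ : Measure (X × X)) (hσ : IsTransportPlan μ₀ μ₁ σ)
    (Γ : Set (X × X)) (hΓmono : CyclicallyMonotone Γ) (hconc : σ Γᶜ = 0)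
    (hfin : transportCost σ < ∞) :
    ∀ σ' : Measure (X × X), IsTransportPlan μ₀ μ₁ σ' →
      transportCost σ ≤ transportCost σ' := by
  classical
  haveI : SecondCountableTopology X := UniformSpace.secondCountable_of_separable X
  obtain ⟨hσprob, hσ₁, hσ₂⟩ := hσ
  haveI := hσprob
  intro σ' hσ'
  obtain ⟨hσ'prob, hσ'₁, hσ'₂⟩ := hσ'
  haveI := hσ'prob
  by_cases hC' : transportCost σ' = ∞
  · rw [hC']; exact le_top
  -- Γ is nonempty
  have hΓne : Γ.Nonempty := by
    rcases Set.eq_empty_or_nonempty Γ with h | h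
    · exfalso
      rw [h, Set.compl_empty] at hconc
      exact one_ne_zero (hσprob.measure_univ ▸ hconc)
    · exact h
  obtain ⟨a, ha⟩ := hΓne
  -- potentials
  set f : X → ℝ := fun x => (OTAux.phi Γ a x).toReal with hfdef
  set g : X → ℝ := fun y => (OTAux.psi Γ a y).toReal with hgdef
  set C : X × X → ℝ := fun p => dist p.1 p.2 ^ 2 with hCdef
  set B : X × X → ℝ := fun p => dist p.1 a.2 ^ 2 + dist a.1 p.2 ^ 2 with hBdef
  have hφm : Measurable (OTAux.phi Γ a) := OTAux.measurable_phi
  have hψm : Measurable (OTAux.psi Γ a) := OTAux.measurable_psi ha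
  have hfm : Measurable f := hφm.ereal_toReal
  have hgm : Measurable g := hψm.ereal_toReal
  have hCc : Continuous C := by unfold C; fun_prop
  -- a.e. membership in Γ
  have haeΓ : ∀ᵐ p ∂σ, p ∈ Γ := by
    rw [ae_iff]; exact hconc
  -- pointwise facts on Γ
  have hpt : ∀ p : X × X, p ∈ Γ →
      f p.1 + g p.2 = C p ∧ |f p.1| ≤ B p ∧ |g p.2| ≤ B p := by
    intro p hp
    have hφf : ((f p.1 : ℝ) : EReal) = OTAux.phi Γ a p.1 :=
      EReal.coe_toReal (OTAux.phi_ne_top ha p.1) (OTAux.phi_ne_bot (a := a) hΓmono hp)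
    have hψf : ((g p.2 : ℝ) : EReal) = OTAux.psi Γ a p.2 :=
      EReal.coe_toReal (OTAux.psi_ne_top ha hΓmono p.2) (OTAux.psi_ne_bot ha hΓmono hp)
    have hle : f p.1 + g p.2 ≤ C p := by
      have := OTAux.duality_le ha p.1 p.2
      rw [← hφf, ← hψf, ← EReal.coe_add, EReal.coe_le_coe_iff] at this
      exact this
    have hge : C p ≤ f p.1 + g p.2 := by
      have := OTAux.duality_ge ha hΓmono hp
      rw [← hφf, ← hψf, ← EReal.coe_add, EReal.coe_le_coe_iff] at this
      exact this
    have heq : f p.1 + g p.2 = C p := le_antisymm hle hge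
    have hubf : f p.1 ≤ dist p.1 a.2 ^ 2 - dist a.1 a.2 ^ 2 := by
      have := OTAux.phi_le_coe ha p.1
      rw [← hφf, EReal.coe_le_coe_iff] at this
      exact this
    have hubg : g p.2 ≤ dist a.1 p.2 ^ 2 := by
      have := OTAux.psi_le_coe ha hΓmono p.2
      rw [← hψf, EReal.coe_le_coe_iff] at this
      exact this
    have hCnn : 0 ≤ C p := sq_nonneg _
    have hd0 : (0:ℝ) ≤ dist a.1 a.2 ^ 2 := sq_nonneg _
    have hd1 : (0:ℝ) ≤ dist p.1 a.2 ^ 2 := sq_nonneg _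
    have hd2 : (0:ℝ) ≤ dist a.1 p.2 ^ 2 := sq_nonneg _
    refine ⟨heq, abs_le.mpr ⟨by simp only [hBdef]; linarith, by simp only [hBdef]; linarith⟩,
      abs_le.mpr ⟨by simp only [hBdef]; linarith, by simp only [hBdef]; linarith⟩⟩
  -- integrability of the bounds
  have hF₀σ : Integrable (fun p : X × X => dist p.1 a.2 ^ 2) σ := by
    have h : Integrable (fun x => dist x a.2 ^ 2) (σ.map Prod.fst) := by
      rw [hσ₁]; exact OTAux.FiniteSecondMoment.integrable hμ₀ a.2
    exact (integrable_map_measure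
      (Continuous.aestronglyMeasurable (by fun_prop))
      measurable_fst.aemeasurable).mp h
  have hF₁σ : Integrable (fun p : X × X => dist a.1 p.2 ^ 2) σ := by
    have h : Integrable (fun y => dist a.1 y ^ 2) (σ.map Prod.snd) := by
      rw [hσ₂]
      have := OTAux.FiniteSecondMoment.integrable hμ₁ a.1
      simpa [dist_comm] using this
    exact (integrable_map_measure
      (Continuous.aestronglyMeasurable (by fun_prop))
      measurable_snd.aemeasurable).mp h
  have hBσ : Integrable B σ := hF₀σ.add hF₁σ
  have hF₀σ' : Integrable (fun p : X × X => dist p.1 a.2 ^ 2) σ' := by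
    have h : Integrable (fun x => dist x a.2 ^ 2) (σ'.map Prod.fst) := by
      rw [hσ'₁]; exact OTAux.FiniteSecondMoment.integrable hμ₀ a.2
    exact (integrable_map_measure
      (Continuous.aestronglyMeasurable (by fun_prop))
      measurable_fst.aemeasurable).mp h
  -- integrability of C
  have hCσ : Integrable C σ := by
    refine ⟨hCc.aestronglyMeasurable, ?_⟩
    rw [hasFiniteIntegral_iff_ofReal (Filter.Eventually.of_forall fun p => sq_nonneg _)]
    exact hfin
  have hCσ' : Integrable C σ' := by
    refine ⟨hCc.aestronglyMeasurable, ?_⟩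
    rw [hasFiniteIntegral_iff_ofReal (Filter.Eventually.of_forall fun p => sq_nonneg _)]
    exact lt_top_iff_ne_top.mpr hC'
  -- integrability of f ∘ fst, g ∘ snd w.r.t. σ
  have hfσ : Integrable (fun p : X × X => f p.1) σ := by
    refine hBσ.mono' ((hfm.comp measurable_fst).aestronglyMeasurable) ?_
    exact haeΓ.mono fun p hp => by
      rw [Real.norm_eq_abs]; exact (hpt p hp).2.1
  have hgσ : Integrable (fun p : X × X => g p.2) σ := by
    refine hBσ.mono' ((hgm.comp measurable_snd).aestronglyMeasurable) ?_
    exact haeΓ.mono fun p hp => by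
      rw [Real.norm_eq_abs]; exact (hpt p hp).2.2
  -- integrability of f, g w.r.t. the marginals
  have hfμ₀ : Integrable f μ₀ := by
    rw [← hσ₁]
    exact (integrable_map_measure hfm.aestronglyMeasurable
      measurable_fst.aemeasurable).mpr hfσ
  have hgμ₁ : Integrable g μ₁ := by
    rw [← hσ₂]
    exact (integrable_map_measure hgm.aestronglyMeasurable
      measurable_snd.aemeasurable).mpr hgσ
  have hfσ' : Integrable (fun p : X × X => f p.1) σ' := by
    have h : Integrable f (σ'.map Prod.fst) := by rw [hσ'₁]; exact hfμ₀
    exact (integrable_map_measure hfm.aestronglyMeasurable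
      measurable_fst.aemeasurable).mp h
  have hgσ' : Integrable (fun p : X × X => g p.2) σ' := by
    have h : Integrable g (σ'.map Prod.snd) := by rw [hσ'₂]; exact hgμ₁
    exact (integrable_map_measure hgm.aestronglyMeasurable
      measurable_snd.aemeasurable).mp h
  -- σ'-a.e. finiteness of the potentials
  have hmeas₀ : MeasurableSet {x : X | OTAux.phi Γ a x = ⊥} :=
    hφm (measurableSet_singleton ⊥)
  have hmeas₁ : MeasurableSet {y : X | OTAux.psi Γ a y = ⊥} :=
    hψm (measurableSet_singleton ⊥)
  have hN₀ : μ₀ {x : X | OTAux.phi Γ a x = ⊥} = 0 := by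
    rw [← hσ₁, Measure.map_apply measurable_fst hmeas₀]
    refine measure_mono_null ?_ hconc
    intro p hp
    simp only [Set.mem_preimage, Set.mem_setOf_eq] at hp
    intro hpΓ
    exact OTAux.phi_ne_bot (a := a) hΓmono hpΓ hp
  have hN₁ : μ₁ {y : X | OTAux.psi Γ a y = ⊥} = 0 := by
    rw [← hσ₂, Measure.map_apply measurable_snd hmeas₁]
    refine measure_mono_null ?_ hconc
    intro p hp
    simp only [Set.mem_preimage, Set.mem_setOf_eq] at hp
    intro hpΓ
    exact OTAux.psi_ne_bot ha hΓmono hpΓ hp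
  have hae₀' : ∀ᵐ p ∂σ', OTAux.phi Γ a p.1 ≠ ⊥ := by
    rw [ae_iff]
    simp only [not_not]
    have : σ' (Prod.fst ⁻¹' {x : X | OTAux.phi Γ a x = ⊥}) = 0 := by
      rw [← Measure.map_apply measurable_fst hmeas₀, hσ'₁]
      exact hN₀
    exact this
  have hae₁' : ∀ᵐ p ∂σ', OTAux.psi Γ a p.2 ≠ ⊥ := by
    rw [ae_iff]
    simp only [not_not]
    have : σ' (Prod.snd ⁻¹' {y : X | OTAux.psi Γ a y = ⊥}) = 0 := by
      rw [← Measure.map_apply measurable_snd hmeas₁, hσ'₂]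
      exact hN₁
    exact this
  have hae' : ∀ᵐ p ∂σ', f p.1 + g p.2 ≤ C p := by
    filter_upwards [hae₀', hae₁'] with p hb0 hb1
    have hφf : ((f p.1 : ℝ) : EReal) = OTAux.phi Γ a p.1 :=
      EReal.coe_toReal (OTAux.phi_ne_top ha p.1) hb0
    have hψf : ((g p.2 : ℝ) : EReal) = OTAux.psi Γ a p.2 :=
      EReal.coe_toReal (OTAux.psi_ne_top ha hΓmono p.2) hb1
    have := OTAux.duality_le ha p.1 p.2
    rw [← hφf, ← hψf, ← EReal.coe_add, EReal.coe_le_coe_iff] at this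
    exact this
  -- the integral comparison
  have key : ∫ p, C p ∂σ ≤ ∫ p, C p ∂σ' := by
    have h1 : ∫ p, C p ∂σ = ∫ p, (f p.1 + g p.2) ∂σ :=
      integral_congr_ae (haeΓ.mono fun p hp => ((hpt p hp).1).symm)
    have h2 : ∫ p, (f p.1 + g p.2) ∂σ = (∫ p, f p.1 ∂σ) + ∫ p, g p.2 ∂σ :=
      integral_add hfσ hgσ
    have h3 : ∫ p, f p.1 ∂σ = ∫ x, f x ∂μ₀ := by
      rw [← hσ₁, integral_map measurable_fst.aemeasurable hfm.aestronglyMeasurable]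
    have h4 : ∫ p, g p.2 ∂σ = ∫ y, g y ∂μ₁ := by
      rw [← hσ₂, integral_map measurable_snd.aemeasurable hgm.aestronglyMeasurable]
    have h3' : ∫ p, f p.1 ∂σ' = ∫ x, f x ∂μ₀ := by
      rw [← hσ'₁, integral_map measurable_fst.aemeasurable hfm.aestronglyMeasurable]
    have h4' : ∫ p, g p.2 ∂σ' = ∫ y, g y ∂μ₁ := by
      rw [← hσ'₂, integral_map measurable_snd.aemeasurable hgm.aestronglyMeasurable]
    have h5 : ∫ p, (f p.1 + g p.2) ∂σ' = (∫ p, f p.1 ∂σ') + ∫ p, g p.2 ∂σ' :=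
      integral_add hfσ' hgσ'
    have h6 : ∫ p, (f p.1 + g p.2) ∂σ' ≤ ∫ p, C p ∂σ' :=
      integral_mono_ae (hfσ'.add hgσ') hCσ' hae'
    linarith
  have e1 : ENNReal.ofReal (∫ p, C p ∂σ) = transportCost σ :=
    ofReal_integral_eq_lintegral_ofReal hCσ
      (Filter.Eventually.of_forall fun p => sq_nonneg _)
  have e2 : ENNReal.ofReal (∫ p, C p ∂σ') = transportCost σ' :=
    ofReal_integral_eq_lintegral_ofReal hCσ'
      (Filter.Eventually.of_forall fun p => sq_nonneg _)
  rw [← e1, ← e2]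
  exact ENNReal.ofReal_le_ofReal key
end

section
/- Let (X,d,𝔪) satisfy: 𝔪 is non-degenerate, and the annulus measure bound 𝔪(B(x₀,r₂)) − 𝔪(B(x₀,r₁)) ≤ C·(w(r₂) − w(r₁)) from a Bishop–Gromov inequality, with a disintegration d𝔪 = ∫ d𝔪_r dℒ¹(r) over spheres ∂B(x₀,r). Fix x,y ∈ X with l := d(x,y), 0 < r₀ < l, and let E := {r ∈ (l−r₀, l) : 𝔪_r(B(y,r₀)) = 0}. Then for every t ∈ (0,1], the set ((1/t)E ∩ (l−r₀, l)) \ E has Lebesgue measure zero. -/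
open MeasureTheory Set Metric
open scoped ENNReal NNReal

/-- A constant-speed geodesic parametrized on `[0,1]`. -/
def IsGeodesic {X : Type*} [MetricSpace X] (γ : ℝ → X) : Prop :=
  ∀ s ∈ Icc (0 : ℝ) 1, ∀ t ∈ Icc (0 : ℝ) 1,
    dist (γ s) (γ t) = |s - t| * dist (γ 0) (γ 1)

/-- `A_{t,x}`: the set of `t`-intermediate points of geodesics from `A` to `x`. -/
def IntermediateSet {X : Type*} [MetricSpace X] (A : Set X) (t : ℝ) (x : X) :
    Set X :=
  {p | ∃ γ : ℝ → X, IsGeodesic γ ∧ γ 0 ∈ A ∧ γ 1 = x ∧ γ t = p}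

/-- A measure `𝔪` is non-degenerate: `𝔪(A) > 0` implies `𝔪(A_{t,x}) > 0` for all
`x ∈ X` and `t ∈ [0,1)`. -/
def Nondegenerate {X : Type*} [MetricSpace X] [MeasurableSpace X]
    (𝔪 : Measure X) : Prop :=
  ∀ A : Set X, MeasurableSet A → 0 < 𝔪 A →
    ∀ (x : X), ∀ t ∈ Ico (0 : ℝ) 1, 0 < 𝔪 (IntermediateSet A t x)

/-- Endpoint distance facts for points of an intermediate set. -/
lemma interm_spec {X : Type*} [MetricSpace X] {A : Set X} {s : ℝ}
    (hs0 : 0 ≤ s) (hs1 : s ≤ 1) {c q : X} (hq : q ∈ IntermediateSet A s c) :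
    ∃ z ∈ A, dist c q = (1 - s) * dist c z ∧ dist z q = s * dist c z := by
  obtain ⟨γ, hγ, h0, h1, hsq⟩ := hq
  have hmem : s ∈ Icc (0:ℝ) 1 := ⟨hs0, hs1⟩
  have h1mem : (1:ℝ) ∈ Icc (0:ℝ) 1 := ⟨zero_le_one, le_refl 1⟩
  have h0mem : (0:ℝ) ∈ Icc (0:ℝ) 1 := ⟨le_refl 0, zero_le_one⟩
  refine ⟨γ 0, h0, ?_, ?_⟩
  · have h := hγ 1 h1mem s hmem
    rw [h1, hsq] at h
    rw [h, abs_of_nonneg (by linarith : (0:ℝ) ≤ 1 - s), dist_comm (γ 0) c]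
  · have h := hγ 0 h0mem s hmem
    rw [hsq, h1] at h
    rw [h, zero_sub, abs_neg, abs_of_nonneg hs0, dist_comm (γ 0) c]

/-- A set-lintegral of a function positive on a positive measure set is nonzero. -/
lemma setLIntegral_ne_zero_of_pos {f : ℝ → ℝ≥0∞} (hf : Measurable f) {S : Set ℝ}
    (hS : MeasurableSet S) (hSpos : volume S ≠ 0) (h : ∀ u ∈ S, f u ≠ 0) :
    (∫⁻ u in S, f u) ≠ 0 := by
  intro h0
  have hae := (setLIntegral_eq_zero_iff hS hf).mp h0
  apply hSpos
  have hsub : S ⊆ {u | ¬ (u ∈ S → f u = 0)} := fun u hu h' => h u hu (h' hu)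
  exact measure_mono_null hsub (ae_iff.mp hae)

set_option maxHeartbeats 3000000 in
/-- in a geodesic metric measure space with non-degenerate `𝔪`, a
Bishop–Gromov annulus bound `𝔪(B(x₀,r₂)) − 𝔪(B(x₀,r₁)) ≤ C(w(r₂) − w(r₁))`, and a
disintegration `d𝔪 = ∫ d𝔪_r dℒ¹(r)` over the spheres `∂B(x₀,r)` (here `x₀ = x`), for
`x, y ∈ X` with `l = d(x,y)`, `0 < r₀ < l` and
`E = {r ∈ (l−r₀,l) : 𝔪_r(B(y,r₀)) = 0}`, every `t ∈ (0,1]` satisfies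
`ℒ¹(((1/t)E ∩ (l−r₀,l)) \ E) = 0`. -/
theorem stmt_4 {X : Type*} [MetricSpace X] [MeasurableSpace X] [BorelSpace X]
    (𝔪 : Measure X)
    (hgeo : ∀ p q : X, ∃ γ : ℝ → X, IsGeodesic γ ∧ γ 0 = p ∧ γ 1 = q)
    (hnd : Nondegenerate 𝔪)
    (x y : X) (w : ℝ → ℝ) (C : ℝ)
    (hBG : ∀ r₁ r₂ : ℝ, 0 < r₁ → r₁ ≤ r₂ →
      (𝔪 (ball x r₂)).toReal - (𝔪 (ball x r₁)).toReal ≤ C * (w r₂ - w r₁))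
    (mr : ℝ → Measure X)
    (hsphere : ∀ r : ℝ, mr r {z | dist x z ≠ r} = 0)
    (hfin : ∀ r : ℝ, IsFiniteMeasure (mr r))
    (hmeas : ∀ s : Set X, MeasurableSet s → Measurable fun r => mr r s)
    (hdis : ∀ s : Set X, MeasurableSet s → 𝔪 s = ∫⁻ r in Ioi (0 : ℝ), mr r s)
    (r₀ : ℝ) (hr₀ : 0 < r₀) (hr₀l : r₀ < dist x y) :
    ∀ t ∈ Ioc (0 : ℝ) 1,
      volume ((((fun r => r / t) '' {r ∈ Ioo (dist x y - r₀) (dist x y) |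
            mr r (ball y r₀) = 0}) ∩ Ioo (dist x y - r₀) (dist x y)) \
          {r ∈ Ioo (dist x y - r₀) (dist x y) | mr r (ball y r₀) = 0}) = 0 := by
  classical
  intro t ht
  obtain ⟨ht0, ht1⟩ := ht
  set l := dist x y with hl_def
  have hl : 0 < l := lt_trans hr₀ hr₀l
  clear_value l
  set E : Set ℝ := {r ∈ Ioo (l - r₀) l | mr r (ball y r₀) = 0} with hE_def
  by_cases hteq : t = 1
  · subst hteq
    have himg : (fun r : ℝ => r / 1) '' E = E := by
      have : (fun r : ℝ => r / 1) = fun r => r := by funext r; exact div_one r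
      rw [this, image_id']
    rw [himg]
    have : (E ∩ Ioo (l - r₀) l) \ E = ∅ := by
      apply diff_eq_empty.mpr
      exact inter_subset_left
    rw [this]
    simp
  have ht1' : t < 1 := lt_of_le_of_ne ht1 hteq
  by_contra hF
  set F : Set ℝ := ((fun r => r / t) '' E ∩ Ioo (l - r₀) l) \ E with hF_def
  -- measurability of distance functions
  have hdx : Measurable fun z : X => dist x z :=
    (continuous_const.dist continuous_id).measurable
  have hdy : Measurable fun z : X => dist y z :=
    (continuous_const.dist continuous_id).measurable
  have hEmeas : MeasurableSet E := by
    have : E = Ioo (l - r₀) l ∩ (fun r => mr r (ball y r₀)) ⁻¹' {0} := by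
      ext r; simp [hE_def]
    rw [this]
    exact measurableSet_Ioo.inter ((hmeas _ measurableSet_ball) (measurableSet_singleton 0))
  have hFmeas : MeasurableSet F := by
    have himg : (fun r : ℝ => r / t) '' E = (fun r : ℝ => r * t) ⁻¹' E := by
      ext u
      constructor
      · rintro ⟨e, he, rfl⟩
        have : e / t * t = e := by field_simp
        simpa [this] using he
      · intro hu
        exact ⟨u * t, hu, by field_simp⟩
    rw [hF_def, himg]
    exact (((measurable_id.mul_const t) hEmeas).inter measurableSet_Ioo).diff hEmeas
  -- basic helper: sphere concentration
  have hsph : ∀ (u : ℝ) (W : Set X), W ⊆ {q | dist x q ≠ u} → mr u W = 0 :=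
    fun u W hW => measure_mono_null hW (hsphere u)
  have hmrW_le : ∀ (u : ℝ) (W : Set X) (P : Set X),
      (W ∩ {q | dist x q = u} ⊆ P) → mr u W ≤ mr u P := by
    intro u W P hWP
    calc mr u W ≤ mr u (W ∩ {q | dist x q = u}) + mr u (W \ {q | dist x q = u}) :=
          measure_le_inter_add_diff _ _ _
      _ ≤ mr u P + 0 := add_le_add (measure_mono hWP)
          (le_of_eq (hsph u _ fun q hq => hq.2))
      _ = mr u P := add_zero _
  -- zero lemma
  have hzero : ∀ (S : Set ℝ) (ρ : ℝ), MeasurableSet S →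
      (∀ᵐ u : ℝ, u ∈ S → mr u (ball y ρ) = 0) →
      𝔪 {q | dist x q ∈ S ∧ dist y q < ρ} = 0 := by
    intro S ρ hSm hae
    have hWm : MeasurableSet {q | dist x q ∈ S ∧ dist y q < ρ} :=
      (hdx hSm).inter (hdy measurableSet_Iio)
    rw [hdis _ hWm]
    apply (setLIntegral_eq_zero_iff measurableSet_Ioi (hmeas _ hWm)).mpr
    filter_upwards [hae] with u hu _
    by_cases huS : u ∈ S
    · have hle : mr u {q | dist x q ∈ S ∧ dist y q < ρ} ≤ mr u (ball y ρ) := by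
        apply hmrW_le
        intro q hq
        have : dist y q < ρ := hq.1.2
        simpa [mem_ball, dist_comm] using this
      have := hu huS
      exact le_antisymm (this ▸ hle) zero_le
    · exact hsph u _ (fun q hq h' => huS (h' ▸ hq.1))
  -- positivity lemma
  have hposl : ∀ (S : Set ℝ) (P : Set X), MeasurableSet S → S ⊆ Ioi 0 →
      volume S ≠ 0 → MeasurableSet P → (∀ u ∈ S, mr u P ≠ 0) →
      0 < 𝔪 {z | dist x z ∈ S ∧ z ∈ P} := by
    intro S P hSm hS0 hSpos hPm hmr0
    have hBm : MeasurableSet {z : X | dist x z ∈ S ∧ z ∈ P} := (hdx hSm).inter hPm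
    rw [hdis _ hBm]
    have key : ∀ u ∈ S, mr u P ≤ mr u {z : X | dist x z ∈ S ∧ z ∈ P} := by
      intro u hu
      apply hmrW_le
      intro q hq
      exact ⟨hq.2 ▸ hu, hq.1⟩
    have h1 : (0:ℝ≥0∞) < ∫⁻ u in S, mr u P := by
      rw [pos_iff_ne_zero]
      exact setLIntegral_ne_zero_of_pos (hmeas _ hPm) hSm hSpos hmr0
    calc (0:ℝ≥0∞) < ∫⁻ u in S, mr u P := h1
      _ ≤ ∫⁻ u in S, mr u {z : X | dist x z ∈ S ∧ z ∈ P} :=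
          setLIntegral_mono (hmeas _ hBm) key
      _ ≤ ∫⁻ u in Ioi (0:ℝ), mr u {z : X | dist x z ∈ S ∧ z ∈ P} :=
          lintegral_mono_set hS0
  -- THE CLAIM
  have claim : ∀ lam ρ₁ ρ₂ a2 : ℝ, 0 < lam → lam < 1 →
      ρ₁ + (1 - lam) * a2 ≤ ρ₂ →
      volume {v : ℝ | v ∈ Ioo (0:ℝ) a2 ∧ mr v (ball y ρ₁) ≠ 0 ∧
        mr (lam * v) (ball y ρ₂) = 0} = 0 := by
    intro lam ρ₁ ρ₂ a2 hlam0 hlam1 hcond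
    by_contra hSne
    set S := {v : ℝ | v ∈ Ioo (0:ℝ) a2 ∧ mr v (ball y ρ₁) ≠ 0 ∧
        mr (lam * v) (ball y ρ₂) = 0} with hS_def
    have hSm : MeasurableSet S := by
      have : S = Ioo (0:ℝ) a2 ∩ (((fun v => mr v (ball y ρ₁)) ⁻¹' {0})ᶜ ∩
          ((fun v => mr (lam * v) (ball y ρ₂)) ⁻¹' {0})) := by
        ext v; simp [hS_def]
      rw [this]
      refine measurableSet_Ioo.inter (MeasurableSet.inter ?_ ?_)
      · exact (((hmeas _ measurableSet_ball)) (measurableSet_singleton 0)).compl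
      · exact ((hmeas _ measurableSet_ball).comp (measurable_const_mul lam))
          (measurableSet_singleton 0)
    have hSsub : S ⊆ Ioi 0 := fun v hv => hv.1.1
    have hBpos := hposl S (ball y ρ₁) hSm hSsub hSne measurableSet_ball
      (fun u hu => hu.2.1)
    have hint := hnd _ ((hdx hSm).inter measurableSet_ball) hBpos x (1 - lam)
      ⟨by linarith, by linarith⟩
    have hS'm : MeasurableSet {u : ℝ | u / lam ∈ S} := (measurable_id.div_const lam) hSm
    have hTzero : 𝔪 {q | dist x q ∈ {u : ℝ | u / lam ∈ S} ∧ dist y q < ρ₂} = 0 := by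
      apply hzero _ _ hS'm
      apply ae_of_all
      intro u hu
      have h1 : lam * (u / lam) = u := by field_simp
      have := hu.2.2
      rwa [h1] at this
    have hsub : IntermediateSet {z | dist x z ∈ S ∧ z ∈ ball y ρ₁} (1 - lam) x ⊆
        {q | dist x q ∈ {u : ℝ | u / lam ∈ S} ∧ dist y q < ρ₂} := by
      intro q hq
      obtain ⟨z, hzA, hdq, hdzq⟩ := interm_spec (by linarith) (by linarith) hq
      obtain ⟨hzS, hzB⟩ := hzA
      have hd0 : (0:ℝ) < dist x z := hzS.1.1
      have hda : dist x z < a2 := hzS.1.2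
      constructor
      · show dist x q / lam ∈ S
        have hxq : dist x q = lam * dist x z := by rw [hdq]; ring
        rw [hxq, mul_div_cancel_left₀ _ (ne_of_gt hlam0)]
        exact hzS
      · have hyz : dist y z < ρ₁ := by
          have := mem_ball.mp hzB
          rwa [dist_comm] at this
        have h2 : dist z q = (1 - lam) * dist x z := hdzq
        have h3 : (1 - lam) * dist x z ≤ (1 - lam) * a2 :=
          mul_le_mul_of_nonneg_left hda.le (by linarith)
        calc dist y q ≤ dist y z + dist z q := dist_triangle y z q
          _ < ρ₁ + (1 - lam) * a2 := by rw [h2]; linarith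
          _ ≤ ρ₂ := hcond
    have : (0:ℝ≥0∞) < 0 :=
      lt_of_lt_of_le hint (le_trans (measure_mono hsub) (le_of_eq hTzero))
    exact absurd this (lt_irrefl 0)
  -- F facts
  have hFsub : F ⊆ Ioo (l - r₀) l := fun a ha => ha.1.2
  have hFE : ∀ a ∈ F, t * a ∈ E := by
    rintro a ⟨⟨⟨e, heE, he⟩, _⟩, _⟩
    have : t * a = e := by rw [← he]; field_simp
    rw [this]; exact heE
  have hFne : ∀ a ∈ F, mr a (ball y r₀) ≠ 0 := by
    rintro a ⟨⟨_, haI⟩, haE⟩ h0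
    exact haE ⟨haI, h0⟩
  obtain ⟨Δ, hΔdef⟩ : ∃ v : ℝ, v = (1 - t) * l := ⟨_, rfl⟩
  have hΔpos : 0 < Δ := by rw [hΔdef]; exact mul_pos (by linarith) hl
  obtain ⟨M, hMdef⟩ : ∃ v : ℝ, v = r₀ + Δ := ⟨_, rfl⟩
  have hM : 0 < M := by rw [hMdef]; linarith
  set TF := {u : ℝ | u / t ∈ F} with hTFdef
  have hTFm : MeasurableSet TF := (measurable_id.div_const t) hFmeas
  have hTFE : ∀ u ∈ TF, u ∈ E := by
    intro u hu
    have h := hFE _ hu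
    have h2 : t * (u / t) = u := by field_simp
    rwa [h2] at h
  have hTFIoo : ∀ u ∈ TF, u ∈ Ioo (l - r₀) l ∧ mr u (ball y r₀) = 0 := by
    intro u hu
    exact ⟨(hTFE u hu).1, (hTFE u hu).2⟩
  set Ann := {z : X | r₀ ≤ dist y z ∧ dist y z < M} with hAnnDef
  have hAnnm : MeasurableSet Ann := (hdy measurableSet_Ici).inter (hdy measurableSet_Iio)
  -- Step 1
  have hFpos0 : F ⊆ Ioi 0 := fun a ha => lt_trans (by linarith) (hFsub ha).1
  have hB₁pos : 0 < 𝔪 {z | dist x z ∈ F ∧ z ∈ ball y r₀} :=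
    hposl F (ball y r₀) hFmeas hFpos0 hF measurableSet_ball hFne
  have hInt₁ := hnd _ ((hdx hFmeas).inter measurableSet_ball) hB₁pos x (1 - t)
    ⟨by linarith, by linarith⟩
  have hT₁ball : 𝔪 {q | dist x q ∈ TF ∧ dist y q < r₀} = 0 :=
    hzero TF r₀ hTFm (ae_of_all _ fun u hu => (hTFIoo u hu).2)
  set R₁ := {u ∈ TF | mr u Ann ≠ 0} with hR₁def
  have hR₁m : MeasurableSet R₁ :=
    hTFm.inter (((hmeas _ hAnnm) (measurableSet_singleton 0)).compl)
  have hT₁ann_pos : 0 < 𝔪 {q | dist x q ∈ TF ∧ q ∈ Ann} := by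
    have hsub : IntermediateSet {z | dist x z ∈ F ∧ z ∈ ball y r₀} (1 - t) x ⊆
        {q | dist x q ∈ TF ∧ dist y q < r₀} ∪ {q | dist x q ∈ TF ∧ q ∈ Ann} := by
      intro q hq
      obtain ⟨z, ⟨hzF, hzB⟩, hdq, hdzq⟩ := interm_spec (by linarith) (by linarith) hq
      have hdxz1 : dist x z < l := (hFsub hzF).2
      have hq1 : dist x q ∈ TF := by
        show dist x q / t ∈ F
        have hxq : dist x q = t * dist x z := by rw [hdq]; ring
        rw [hxq, mul_div_cancel_left₀ _ (ne_of_gt ht0)]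
        exact hzF
      have hq2 : dist y q < M := by
        have h1 : dist y q ≤ dist y z + dist z q := dist_triangle y z q
        have h2 : dist y z < r₀ := by
          have := mem_ball.mp hzB
          rwa [dist_comm] at this
        have h3 : dist z q = (1 - t) * dist x z := hdzq
        have h4 : (1 - t) * dist x z < (1 - t) * l :=
          mul_lt_mul_of_pos_left hdxz1 (by linarith)
        rw [hMdef, hΔdef]
        rw [h3] at h1
        linarith
      by_cases hcase : dist y q < r₀
      · exact Or.inl ⟨hq1, hcase⟩
      · exact Or.inr ⟨hq1, ⟨le_of_not_gt hcase, hq2⟩⟩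
    have h := lt_of_lt_of_le hInt₁ (measure_mono hsub)
    have h2 := measure_union_le (μ := 𝔪) {q | dist x q ∈ TF ∧ dist y q < r₀}
      {q | dist x q ∈ TF ∧ q ∈ Ann}
    rw [hT₁ball, zero_add] at h2
    exact lt_of_lt_of_le h h2
  have hR₁pos : volume R₁ ≠ 0 := by
    intro h0
    have hWm : MeasurableSet {q | dist x q ∈ TF ∧ q ∈ Ann} := (hdx hTFm).inter hAnnm
    have hzed : 𝔪 {q | dist x q ∈ TF ∧ q ∈ Ann} = 0 := by
      rw [hdis _ hWm]
      have hae : ∀ᵐ u : ℝ, u ∉ R₁ := by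
        rw [ae_iff]
        simpa using h0
      apply (setLIntegral_eq_zero_iff measurableSet_Ioi (hmeas _ hWm)).mpr
      filter_upwards [hae] with u hu _
      by_cases huTF : u ∈ TF
      · have humr : mr u Ann = 0 := by
          by_contra hne
          exact hu ⟨huTF, hne⟩
        have hle : mr u {q | dist x q ∈ TF ∧ q ∈ Ann} ≤ mr u Ann := by
          apply hmrW_le
          intro q hq
          exact hq.1.2
        exact le_antisymm (humr ▸ hle) zero_le
      · exact hsph u _ (fun q hq h' => huTF (h' ▸ hq.1))
    exact absurd hzed (ne_of_gt hT₁ann_pos)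
  -- R₁ basic facts
  have hR₁Ioo : ∀ u ∈ R₁, u ∈ Ioo (l - r₀) l := fun u hu => (hTFIoo u hu.1).1
  have hR₁Z : ∀ u ∈ R₁, mr u (ball y r₀) = 0 := fun u hu => (hTFIoo u hu.1).2
  have hR₁sub0 : R₁ ⊆ Ioi 0 := by
    intro u hu
    have := (hR₁Ioo u hu).1
    simp only [mem_Ioi]
    linarith
  have hR₁mr : ∀ u ∈ R₁, mr u Ann ≠ 0 := fun u hu => hu.2
  clear_value R₁ TF F E
  -- density point of R₁
  have hdenx : ∃ e ∈ R₁, Filter.Tendsto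
      (fun r => volume (R₁ ∩ closedBall e r) / volume (closedBall e r))
      (nhdsWithin 0 (Ioi 0)) (nhds 1) := by
    have hae := Besicovitch.ae_tendsto_measure_inter_div_of_measurableSet
      (volume : Measure ℝ) hR₁m
    by_contra hcon
    push_neg at hcon
    apply hR₁pos
    have hsubbad : R₁ ⊆ {e : ℝ | ¬ Filter.Tendsto
        (fun r => volume (R₁ ∩ closedBall e r) / volume (closedBall e r))
        (nhdsWithin 0 (Ioi 0)) (nhds (R₁.indicator 1 e))} := by
      intro e he ht'
      refine hcon e he ?_
      rwa [Set.indicator_of_mem he, Pi.one_apply] at ht'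
    exact measure_mono_null hsubbad (ae_iff.mp hae)
  obtain ⟨estar, hestarR₁, hestarden⟩ := hdenx
  have hestarIoo : estar ∈ Ioo (l - r₀) l := hR₁Ioo _ hestarR₁
  obtain ⟨βq, hβdef⟩ : ∃ v : ℝ, v = estar - (l - r₀) := ⟨_, rfl⟩
  obtain ⟨ηq, hηdef⟩ : ∃ v : ℝ, v = l - estar := ⟨_, rfl⟩
  have hβ : 0 < βq := by rw [hβdef]; linarith [hestarIoo.1]
  have hη : 0 < ηq := by rw [hηdef]; linarith [hestarIoo.2]
  have hβη : βq + ηq = r₀ := by rw [hβdef, hηdef]; ring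
  have hestar0 : 0 < estar := by linarith [hestarIoo.1]
  -- choose ζ₀
  have hev1 : ∀ᶠ r in nhdsWithin 0 (Ioi 0), ENNReal.ofReal (399/400) <
      volume (R₁ ∩ closedBall estar r) / volume (closedBall estar r) := by
    apply hestarden.eventually (eventually_gt_nhds ?_)
    rw [show (1 : ℝ≥0∞) = ENNReal.ofReal 1 by simp]
    exact ENNReal.ofReal_lt_ofReal_iff_of_nonneg (by norm_num) |>.mpr (by norm_num)
  have hev2 : ∀ᶠ r in nhdsWithin 0 (Ioi 0), r ∈ Ioo (0:ℝ) (min (βq/8) (ηq/8)) :=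
    Ioo_mem_nhdsGT_of_mem ⟨le_refl 0, by positivity⟩
  obtain ⟨ζ₀, hrat, hζ₀Ioo⟩ := (hev1.and hev2).exists
  have hζ₀pos : 0 < ζ₀ := hζ₀Ioo.1
  have hζ₀β : ζ₀ < βq/8 := lt_of_lt_of_le hζ₀Ioo.2 (min_le_left _ _)
  have hζ₀η : ζ₀ < ηq/8 := lt_of_lt_of_le hζ₀Ioo.2 (min_le_right _ _)
  -- G bound
  have hGbound : volume (Icc estar (estar + ζ₀) \ R₁) ≤ ENNReal.ofReal (ζ₀/100) := by
    have hcb : volume (closedBall estar ζ₀) = ENNReal.ofReal (2*ζ₀) :=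
      Real.volume_closedBall _ _
    have hfin' : volume (closedBall estar ζ₀) ≠ ⊤ := by
      rw [hcb]; exact ENNReal.ofReal_ne_top
    have hne0 : volume (closedBall estar ζ₀) ≠ 0 := by
      rw [hcb]
      simp only [ne_eq, ENNReal.ofReal_eq_zero, not_le]
      linarith
    have hge : ENNReal.ofReal (399/400) * volume (closedBall estar ζ₀) ≤
        volume (R₁ ∩ closedBall estar ζ₀) :=
      le_of_lt ((ENNReal.lt_div_iff_mul_lt (Or.inl hne0) (Or.inl hfin')).mp hrat)
    have hdiffsub : Icc estar (estar + ζ₀) \ R₁ ⊆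
        closedBall estar ζ₀ \ (R₁ ∩ closedBall estar ζ₀) := by
      intro u hu
      have hucb : u ∈ closedBall estar ζ₀ := by
        rw [Real.closedBall_eq_Icc]
        exact ⟨by linarith [hu.1.1], hu.1.2⟩
      exact ⟨hucb, fun hmem => hu.2 hmem.1⟩
    have hdiffeq : volume (closedBall estar ζ₀ \ (R₁ ∩ closedBall estar ζ₀)) =
        volume (closedBall estar ζ₀) - volume (R₁ ∩ closedBall estar ζ₀) :=
      measure_diff inter_subset_right
        ((hR₁m.inter measurableSet_closedBall).nullMeasurableSet)
        (ne_top_of_le_ne_top hfin' (measure_mono inter_subset_right))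
    calc volume (Icc estar (estar + ζ₀) \ R₁)
        ≤ volume (closedBall estar ζ₀ \ (R₁ ∩ closedBall estar ζ₀)) :=
          measure_mono hdiffsub
      _ = volume (closedBall estar ζ₀) - volume (R₁ ∩ closedBall estar ζ₀) := hdiffeq
      _ ≤ ENNReal.ofReal (2*ζ₀) - ENNReal.ofReal (399/400) * ENNReal.ofReal (2*ζ₀) := by
          apply tsub_le_tsub (le_of_eq hcb)
          rw [← hcb]; exact hge
      _ ≤ ENNReal.ofReal (ζ₀/100) := by
          rw [← ENNReal.ofReal_mul (by norm_num : (0:ℝ) ≤ 399/400),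
            ← ENNReal.ofReal_sub _ (by positivity)]
          apply ENNReal.ofReal_le_ofReal
          nlinarith [hζ₀pos]
  obtain ⟨Greal, hGdef⟩ : ∃ v : ℝ, v = (volume (Icc estar (estar + ζ₀) \ R₁)).toReal := ⟨_, rfl⟩
  have hGnn : 0 ≤ Greal := by rw [hGdef]; exact ENNReal.toReal_nonneg
  have hGle : Greal ≤ ζ₀/100 := by
    rw [hGdef]
    have := ENNReal.toReal_mono ENNReal.ofReal_ne_top hGbound
    rwa [ENNReal.toReal_ofReal (by positivity)] at this
  have hGfin : volume (Icc estar (estar + ζ₀) \ R₁) ≠ ⊤ :=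
    ne_top_of_le_ne_top ENNReal.ofReal_ne_top hGbound
  have hGofReal : volume (Icc estar (estar + ζ₀) \ R₁) = ENNReal.ofReal Greal := by
    rw [hGdef]; exact (ENNReal.ofReal_toReal hGfin).symm
  obtain ⟨Gp, hGpdef⟩ : ∃ v : ℝ, v = ζ₀ / 100 := ⟨_, rfl⟩
  have hGpPos : 0 < Gp := by rw [hGpdef]; positivity
  have hGGp : Greal ≤ Gp := by rw [hGpdef]; exact hGle
  -- parameters μp, lam
  obtain ⟨m₀, hm₀def⟩ : ∃ v : ℝ, v = min (min (l/4) (ζ₀/8)) (min (βq/12) (ηq/8)) := ⟨_, rfl⟩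
  have hm₀pos : 0 < m₀ := by
    rw [hm₀def]
    exact lt_min (lt_min (by linarith) (by positivity)) (lt_min (by positivity) (by positivity))
  obtain ⟨μp, hμdef⟩ : ∃ v : ℝ, v = min (1/2 : ℝ) (m₀ / M) := ⟨_, rfl⟩
  have hμ0 : 0 < μp := by
    rw [hμdef]; exact lt_min (by norm_num) (div_pos hm₀pos hM)
  have hμhalf : μp ≤ 1/2 := by rw [hμdef]; exact min_le_left _ _
  have hμM : μp * M ≤ m₀ := by
    rw [hμdef]
    calc min (1/2 : ℝ) (m₀ / M) * M ≤ (m₀/M) * M :=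
          mul_le_mul_of_nonneg_right (min_le_right _ _) hM.le
      _ = m₀ := div_mul_cancel₀ _ (ne_of_gt hM)
  have hμMpos : 0 < μp * M := mul_pos hμ0 hM
  have hμMl : μp * M ≤ l/4 := le_trans hμM (by rw [hm₀def]; exact le_trans (min_le_left _ _) (min_le_left _ _))
  have hμMζ : μp * M ≤ ζ₀/8 := le_trans hμM (by rw [hm₀def]; exact le_trans (min_le_left _ _) (min_le_right _ _))
  have hμMβ : μp * M ≤ βq/12 := le_trans hμM (by rw [hm₀def]; exact le_trans (min_le_right _ _) (min_le_left _ _))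
  have hμMη : μp * M ≤ ηq/8 := le_trans hμM (by rw [hm₀def]; exact le_trans (min_le_right _ _) (min_le_right _ _))
  have hden2 : 0 < l - μp * M := by linarith
  obtain ⟨lam, hlamdef⟩ : ∃ v : ℝ, v = (estar + 2*Gp) / (l - μp * M) := ⟨_, rfl⟩
  have hlam0 : 0 < lam := by rw [hlamdef]; exact div_pos (by linarith) hden2
  have hlamId : lam * (l - μp * M) = estar + 2*Gp := by
    rw [hlamdef]; exact div_mul_cancel₀ _ (ne_of_gt hden2)
  have hlam1 : lam < 1 := by
    rw [hlamdef, div_lt_one hden2]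
    linarith [hζ₀η, hμMη]
  obtain ⟨a2, ha2def⟩ : ∃ v : ℝ, v = estar + ζ₀ := ⟨_, rfl⟩
  have ha2pos : 0 < a2 := by rw [ha2def]; linarith
  obtain ⟨lam0, hlam0def⟩ : ∃ v : ℝ, v = estar / a2 := ⟨_, rfl⟩
  have hlam00 : 0 < lam0 := by rw [hlam0def]; exact div_pos hestar0 ha2pos
  have hlam01 : lam0 < 1 := by
    rw [hlam0def, div_lt_one ha2pos]; rw [ha2def]; linarith
  have hlam0Id : lam0 * a2 = estar := by
    rw [hlam0def]; exact div_mul_cancel₀ _ (ne_of_gt ha2pos)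
  obtain ⟨rhot, hrhodef⟩ : ∃ v : ℝ, v = μp*M + (1 - lam)*(l + μp*M) + βq/100 := ⟨_, rfl⟩
  have hrhopos : 0 < rhot := by
    have h1 : 0 ≤ (1-lam)*(l+μp*M) := mul_nonneg (by linarith) (by linarith)
    rw [hrhodef]; linarith
  -- budget
  have hbudget : rhot + ζ₀ ≤ r₀ := by
    have hexp : (1 - lam)*(l + μp*M) = l + μp*M - (estar + 2*Gp) - 2*(lam*(μp*M)) := by
      linear_combination (-1 : ℝ) * hlamId
    have hkey : (1 - lam)*(l + μp*M) ≤ ηq + 3*(μp*M) := by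
      have h2 : 0 ≤ lam*(μp*M) := mul_nonneg hlam0.le hμMpos.le
      rw [hexp, hηdef]
      linarith [hGpPos]
    rw [hrhodef]
    linarith [hμMβ, hζ₀β, hβη, hkey]
  obtain ⟨rightEnd, hreDef⟩ : ∃ v : ℝ, v = lam * (l + μp*M) := ⟨_, rfl⟩
  have hRight : rightEnd ≤ a2 := by
    have h2lamu : lam * (μp*M) ≤ μp*M := mul_le_of_le_one_left hμMpos.le hlam1.le
    have hexp2 : lam * (l + μp*M) = estar + 2*Gp + 2*(lam*(μp*M)) := by
      linear_combination hlamId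
    rw [hreDef, ha2def, hexp2]
    linarith [hGpdef, hμMζ]
  -- Tonelli block
  obtain ⟨sset, hssetdef⟩ : ∃ s : Set (ℝ × ℝ), s = {p : ℝ × ℝ | p.1 ∈ Ioo lam0 1 ∧
      p.2 ∈ Ioo 0 a2 ∧ mr p.2 (ball y rhot) ≠ 0 ∧ mr (p.1 * p.2) (ball y r₀) = 0} :=
    ⟨_, rfl⟩
  have hsm : MeasurableSet sset := by
    have hset : sset = (Prod.fst ⁻¹' Ioo lam0 1) ∩ ((Prod.snd ⁻¹' Ioo 0 a2) ∩
        (((fun p : ℝ×ℝ => mr p.2 (ball y rhot)) ⁻¹' {0})ᶜ ∩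
        ((fun p : ℝ×ℝ => mr (p.1*p.2) (ball y r₀)) ⁻¹' {0}))) := by
      rw [hssetdef]; ext p; simp
    rw [hset]
    refine (measurable_fst measurableSet_Ioo).inter
      ((measurable_snd measurableSet_Ioo).inter (MeasurableSet.inter ?_ ?_))
    · exact (((hmeas _ measurableSet_ball).comp measurable_snd)
        (measurableSet_singleton 0)).compl
    · exact (((hmeas _ measurableSet_ball).comp (measurable_fst.mul measurable_snd))
        (measurableSet_singleton 0))
  have hsec : ∀ lam' : ℝ, volume (Prod.mk lam' ⁻¹' sset) = 0 := by
    intro lam'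
    by_cases hmem : lam' ∈ Ioo lam0 1
    · have hsub : Prod.mk lam' ⁻¹' sset ⊆ {v : ℝ | v ∈ Ioo (0:ℝ) a2 ∧
          mr v (ball y rhot) ≠ 0 ∧ mr (lam' * v) (ball y r₀) = 0} := by
        intro v hv
        rw [hssetdef] at hv
        exact ⟨hv.2.1, hv.2.2.1, hv.2.2.2⟩
      refine measure_mono_null hsub
        (claim lam' rhot r₀ a2 (lt_trans hlam00 hmem.1) hmem.2 ?_)
      have h1 : (1 - lam') * a2 ≤ (1 - lam0) * a2 :=
        mul_le_mul_of_nonneg_right (by linarith [hmem.1]) ha2pos.le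
      have h2 : (1 - lam0) * a2 = ζ₀ := by
        have hx : (1-lam0)*a2 = a2 - lam0*a2 := by ring
        rw [hx, hlam0Id, ha2def]; ring
      linarith
    · have hempty : Prod.mk lam' ⁻¹' sset = ∅ := by
        apply eq_empty_iff_forall_notMem.mpr
        intro v hv
        rw [hssetdef] at hv
        exact hmem hv.1
      rw [hempty]; exact measure_empty
  have hprod : (volume.prod volume) sset = 0 :=
    (Measure.measure_prod_null hsm).mpr (ae_of_all _ hsec)
  have hswapm : MeasurableSet (Prod.swap ⁻¹' sset : Set (ℝ×ℝ)) := measurable_swap hsm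
  have hswap0 : (volume.prod volume) (Prod.swap ⁻¹' sset) = 0 := by
    rw [← Measure.map_apply measurable_swap hsm, Measure.prod_swap]
    exact hprod
  have haev0 := (Measure.measure_prod_null hswapm).mp hswap0
  have haev : ∀ᵐ v : ℝ, volume (Prod.mk v ⁻¹' (Prod.swap ⁻¹' sset)) = 0 := by
    filter_upwards [haev0] with v hv using hv
  -- badV null
  have hbadV : volume {v : ℝ | v ∈ Ioo (estar + 2*Gp) a2 ∧
      mr v (ball y rhot) ≠ 0} = 0 := by
    have hsubbad : {v : ℝ | v ∈ Ioo (estar + 2*Gp) a2 ∧ mr v (ball y rhot) ≠ 0} ⊆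
        {v : ℝ | ¬ volume (Prod.mk v ⁻¹' (Prod.swap ⁻¹' sset)) = 0} := by
      intro v hv hvsec
      obtain ⟨hvwin, hvmr⟩ := hv
      have hv0 : 0 < v := lt_trans (by linarith) hvwin.1
      have hginc : (fun lam' : ℝ => lam' * v) ⁻¹' (R₁ ∩ Ioo estar v) ⊆
          Prod.mk v ⁻¹' (Prod.swap ⁻¹' sset) := by
        intro lam' hlam'
        obtain ⟨hR, hIoo⟩ := hlam'
        have hlam'1 : lam' < 1 := by
          have hx : lam' * v < 1 * v := by rw [one_mul]; exact hIoo.2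
          exact lt_of_mul_lt_mul_right hx hv0.le
        have hlam'0 : lam0 < lam' := by
          have h1 : estar / v < lam' := by
            rw [div_lt_iff₀ hv0]; exact hIoo.1
          have h2 : lam0 ≤ estar / v := by
            rw [hlam0def]
            exact div_le_div_of_nonneg_left hestar0.le hv0 (le_of_lt hvwin.2)
          linarith
        show (lam', v) ∈ sset
        rw [hssetdef]
        exact ⟨⟨hlam'0, hlam'1⟩, ⟨hv0, hvwin.2⟩, hvmr, hR₁Z _ hR⟩
      have hle0 : volume ((fun lam' : ℝ => lam' * v) ⁻¹' (R₁ ∩ Ioo estar v)) = 0 :=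
        measure_mono_null hginc hvsec
      rw [Real.volume_preimage_mul_right (ne_of_gt hv0)] at hle0
      have hzero2 : volume (R₁ ∩ Ioo estar v) = 0 := by
        have hx : ENNReal.ofReal |v⁻¹| ≠ 0 := by
          simp only [ne_eq, ENNReal.ofReal_eq_zero, not_le, abs_pos]
          exact inv_ne_zero (ne_of_gt hv0)
        rcases mul_eq_zero.mp hle0 with h | h
        · exact absurd h hx
        · exact h
      have hlow : ENNReal.ofReal (v - estar - Greal) ≤ volume (R₁ ∩ Ioo estar v) := by
        have h1 : volume (Ioo estar v) ≤
            volume (Ioo estar v ∩ R₁) + volume (Ioo estar v \ R₁) :=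
          measure_le_inter_add_diff _ _ _
        have h2 : volume (Ioo estar v \ R₁) ≤ ENNReal.ofReal Greal := by
          rw [← hGofReal]
          apply measure_mono
          intro u hu
          refine ⟨⟨le_of_lt hu.1.1, ?_⟩, hu.2⟩
          have := hu.1.2
          have hva2 : v < a2 := hvwin.2
          rw [ha2def] at hva2
          linarith
        have h3 : volume (Ioo estar v) = ENNReal.ofReal (v - estar) := Real.volume_Ioo
        rw [h3] at h1
        have h4 : ENNReal.ofReal (v - estar) - ENNReal.ofReal Greal ≤
            volume (Ioo estar v ∩ R₁) := by
          apply tsub_le_iff_right.mpr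
          exact le_trans h1 (add_le_add le_rfl h2)
        rw [← ENNReal.ofReal_sub _ hGnn] at h4
        rw [inter_comm] at h4
        exact h4
      have hposlow : (0:ℝ≥0∞) < ENNReal.ofReal (v - estar - Greal) := by
        apply ENNReal.ofReal_pos.mpr
        linarith [hvwin.1, hGGp, hGpPos]
      rw [hzero2] at hlow
      exact absurd hlow (not_le.mpr hposlow)
    exact measure_mono_null hsubbad (ae_iff.mp haev)
  -- Step 2
  have hA₂pos : 0 < 𝔪 {z | dist x z ∈ R₁ ∧ z ∈ Ann} :=
    hposl R₁ Ann hR₁m hR₁sub0 hR₁pos hAnnm hR₁mr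
  have hInt₂ := hnd _ ((hdx hR₁m).inter hAnnm) hA₂pos y (1 - μp)
    ⟨by linarith, by linarith⟩
  set Cell := {q : X | dist y q ≤ μp*M ∧ l - μp*M ≤ dist x q ∧ dist x q ≤ l + μp*M}
    with hCelldef
  have hCellm : MeasurableSet Cell :=
    (hdy measurableSet_Iic).inter ((hdx measurableSet_Ici).inter (hdx measurableSet_Iic))
  have hInt₂sub : IntermediateSet {z | dist x z ∈ R₁ ∧ z ∈ Ann} (1 - μp) y ⊆ Cell := by
    intro q hq
    obtain ⟨z, ⟨hzR, hzAnn⟩, hdq, hdzq⟩ := interm_spec (by linarith) (by linarith) hq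
    have hdyq : dist y q = μp * dist y z := by rw [hdq]; ring
    have h1 : dist y q ≤ μp * M := by
      rw [hdyq]
      exact mul_le_mul_of_nonneg_left hzAnn.2.le hμ0.le
    refine ⟨h1, ?_, ?_⟩
    · have h2 : dist x y ≤ dist x q + dist q y := dist_triangle x q y
      have h3 : dist q y = dist y q := dist_comm q y
      rw [h3] at h2
      linarith
    · have h2 : dist x q ≤ dist x y + dist y q := dist_triangle x y q
      linarith
  have hCellpos : 0 < 𝔪 Cell := lt_of_lt_of_le hInt₂ (measure_mono hInt₂sub)
  -- Step 3
  have hInt₃ := hnd _ hCellm hCellpos x (1 - lam) ⟨by linarith, by linarith⟩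
  have hInt₃sub : IntermediateSet Cell (1 - lam) x ⊆
      {q | dist x q ∈ Icc (estar + 2*Gp) rightEnd ∧ dist y q < rhot} := by
    intro q hq
    obtain ⟨z, hzC, hdq, hdzq⟩ := interm_spec (by linarith) (by linarith) hq
    have hdxq : dist x q = lam * dist x z := by rw [hdq]; ring
    obtain ⟨hz1, hz2, hz3⟩ := hzC
    refine ⟨⟨?_, ?_⟩, ?_⟩
    · rw [hdxq, ← hlamId]
      exact mul_le_mul_of_nonneg_left hz2 hlam0.le
    · rw [hdxq, hreDef]
      exact mul_le_mul_of_nonneg_left hz3 hlam0.le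
    · have h2 : dist z q = (1 - lam) * dist x z := hdzq
      have h3 : (1-lam) * dist x z ≤ (1-lam) * (l + μp*M) :=
        mul_le_mul_of_nonneg_left hz3 (by linarith)
      have h4 : dist y q ≤ dist y z + dist z q := dist_triangle y z q
      rw [h2] at h4
      rw [hrhodef]
      linarith [hβ]
  have hT₃zero : 𝔪 {q | dist x q ∈ Icc (estar + 2*Gp) rightEnd ∧ dist y q < rhot} = 0 := by
    apply hzero _ _ measurableSet_Icc
    have hsing : volume ({estar + 2*Gp, a2} : Set ℝ) = 0 :=
      Set.Countable.measure_zero ((countable_singleton _).insert _) _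
    have hbig : volume ({v : ℝ | v ∈ Ioo (estar + 2*Gp) a2 ∧ mr v (ball y rhot) ≠ 0} ∪
        ({estar + 2*Gp, a2} : Set ℝ)) = 0 := measure_union_null hbadV hsing
    have hae2 : ∀ᵐ u : ℝ, u ∉ ({v : ℝ | v ∈ Ioo (estar + 2*Gp) a2 ∧
        mr v (ball y rhot) ≠ 0} ∪ ({estar + 2*Gp, a2} : Set ℝ)) :=
      compl_mem_ae_iff.mpr hbig
    filter_upwards [hae2] with u hu huIcc
    by_contra hne
    apply hu
    rcases eq_or_lt_of_le huIcc.1 with heq | hlt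
    · exact Or.inr (Or.inl heq.symm)
    · rcases eq_or_lt_of_le (le_trans huIcc.2 hRight) with heq2 | hlt2
      · exact Or.inr (Or.inr heq2)
      · exact Or.inl ⟨⟨hlt, hlt2⟩, hne⟩
  exact absurd hT₃zero (ne_of_gt (lt_of_lt_of_le hInt₃ (measure_mono hInt₃sub)))
end

section
/- Let (X,d) be a complete, locally compact length space, and let γ: ℝ → X be a continuous curve such that every point of the image of γ has an open neighbourhood in X of the form γ((t−δ, t+δ)) on which γ restricted is an isometry (onto that neighbourhood). Then the image of γ is closed in X, hence (X being connected as a length space) Im γ = X. -/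
open Set Metric

/-- A (complete) metric space is a length space iff it has approximate midpoints:
this is the standard characterization of length spaces among complete spaces. -/
def ApproxMidpoints (X : Type*) [MetricSpace X] : Prop :=
  ∀ x y : X, ∀ ε > (0 : ℝ), ∃ z : X,
    dist x z ≤ dist x y / 2 + ε ∧ dist z y ≤ dist x y / 2 + ε

lemma approx_frac {X : Type*} [MetricSpace X] (hX : ApproxMidpoints X) :
    ∀ n : ℕ, ∀ x y : X, ∀ ε > (0:ℝ), ∃ z : X,
      dist x z ≤ dist x y / 2 ^ n + ε ∧ dist z y ≤ dist x y - dist x y / 2 ^ n + ε := by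
  intro n
  induction n with
  | zero =>
    intro x y ε hε
    refine ⟨y, ?_, by simp [le_of_lt hε]⟩
    simpa using le_of_lt (by linarith : dist x y < dist x y + ε)
  | succ n ih =>
    intro x y ε hε
    obtain ⟨m, hm1, hm2⟩ := hX x y (ε/4) (by linarith)
    obtain ⟨z, hz1, hz2⟩ := ih x m (ε/4) (by linarith)
    have hp : (0:ℝ) < 2 ^ n := by positivity
    have hp1 : (1:ℝ) ≤ 2 ^ n := one_le_pow₀ (by norm_num)
    have hmlo : dist x y / 2 - ε/4 ≤ dist x m := by
      have := dist_triangle x m y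
      linarith
    refine ⟨z, ?_, ?_⟩
    · have h1 : dist x m / 2 ^ n ≤ (dist x y / 2 + ε/4) / 2 ^ n := by gcongr
      have e1 : (dist x y / 2 + ε/4) / 2 ^ n = dist x y / 2 ^ (n+1) + (ε/4) / 2^n := by
        rw [pow_succ]; ring
      have h7 : (ε/4) / 2 ^ n ≤ ε/4 := div_le_self (by linarith) hp1
      linarith
    · have h4 : dist z y ≤ dist z m + dist m y := dist_triangle z m y
      have h5 : (0:ℝ) ≤ (dist x m - (dist x y/2 - ε/4)) / 2 ^ n :=
        div_nonneg (by linarith) hp.le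
      have e2 : dist x m / 2 ^ n - (dist x y/2 - ε/4) / 2 ^ n
          = (dist x m - (dist x y/2 - ε/4)) / 2 ^ n := by ring
      have e3 : (dist x y / 2 - ε/4) / 2 ^ n = dist x y / 2 ^ (n+1) - (ε/4) / 2^n := by
        rw [pow_succ]; ring
      have h7 : (ε/4) / 2 ^ n ≤ ε/4 := div_le_self (by linarith) hp1
      linarith

/-- let `X` be a complete, locally compact length space and `γ : ℝ → X` a
continuous curve such that every point of its image has an open neighbourhood of the
form `γ((t−δ,t+δ))` on which `γ` restricts to an isometry. Then the image of `γ` is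
closed in `X`, hence (`X` being connected as a length space) `Im γ = X`. -/
theorem stmt_7 {X : Type*} [MetricSpace X] [CompleteSpace X] [LocallyCompactSpace X]
    (hX : ApproxMidpoints X)
    (γ : ℝ → X) (hγ : Continuous γ)
    (hloc : ∀ t : ℝ, ∃ δ > (0 : ℝ), IsOpen (γ '' Ioo (t - δ) (t + δ)) ∧
      ∀ s ∈ Ioo (t - δ) (t + δ), ∀ u ∈ Ioo (t - δ) (t + δ),
        dist (γ s) (γ u) = |s - u|) :
    IsClosed (range γ) ∧ range γ = univ := by
  have hmain : ∀ y : X, y ∈ range γ := by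
    intro y
    set ψ : ℝ → ℝ := fun s => dist (γ s) y with hψdef
    have hψc : Continuous ψ := Continuous.dist hγ continuous_const
    set D : ℝ := ψ 0 with hDdef
    set S : Set ℝ := {c | 0 ≤ c ∧ ∀ ε > (0:ℝ), ∃ s : ℝ, |s| ≤ c + ε ∧ ψ s ≤ D - c + ε}
      with hSdef
    have hS0 : (0:ℝ) ∈ S := by
      refine ⟨le_refl 0, fun ε hε => ⟨0, ?_, ?_⟩⟩ <;> simp [le_of_lt hε, hDdef]
    have hSbdd : BddAbove S := by
      refine ⟨D, fun c hc => ?_⟩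
      refine le_of_forall_pos_le_add (fun ε hε => ?_)
      obtain ⟨s, _, hs2⟩ := hc.2 ε hε
      have : (0:ℝ) ≤ ψ s := dist_nonneg
      linarith
    set c := sSup S with hcdef
    have hcS : c ∈ S := by
      have hc0 : (0:ℝ) ≤ c := le_csSup hSbdd hS0
      refine ⟨hc0, fun ε hε => ?_⟩
      obtain ⟨c', hc'S, hc'⟩ := exists_lt_of_lt_csSup ⟨0, hS0⟩
        (show c - ε/2 < c by linarith)
      obtain ⟨s, h1, h2⟩ := hc'S.2 (ε/2) (by linarith)
      have hle : c' ≤ c := le_csSup hSbdd hc'S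
      exact ⟨s, by linarith, by linarith⟩
    -- extract an exact witness by compactness in ℝ
    have hwit : ∃ s : ℝ, |s| ≤ c ∧ ψ s ≤ D - c := by
      have h : ∀ n : ℕ, ∃ s : ℝ, |s| ≤ c + 1/(n+1) ∧ ψ s ≤ D - c + 1/(n+1) := by
        intro n
        exact hcS.2 (1/(n+1)) (by positivity)
      choose u hu1 hu2 using h
      have huK : ∀ n, u n ∈ Icc (-(c+1)) (c+1) := by
        intro n
        have h1 : (1:ℝ)/(n+1) ≤ 1 := by
          rw [div_le_one (by positivity)]
          have : (0:ℝ) ≤ (n:ℝ) := Nat.cast_nonneg n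
          linarith
        have hb : c + 1/((n:ℝ)+1) ≤ c + 1 := by linarith
        have := abs_le.1 ((hu1 n).trans hb)
        exact ⟨this.1, this.2⟩
      obtain ⟨s₀, _, φ, hφ, hlim⟩ := (isCompact_Icc).tendsto_subseq huK
      have hinv : Filter.Tendsto (fun k : ℕ => (1:ℝ)/(φ k + 1)) Filter.atTop (nhds 0) := by
        have h0 : Filter.Tendsto (fun n : ℕ => (1:ℝ)/(n + 1)) Filter.atTop (nhds 0) :=
          tendsto_one_div_add_atTop_nhds_zero_nat
        exact h0.comp hφ.tendsto_atTop
      refine ⟨s₀, ?_, ?_⟩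
      · have habs : Filter.Tendsto (fun k => |u (φ k)|) Filter.atTop (nhds |s₀|) :=
          (continuous_abs.tendsto s₀).comp hlim
        have hb : Filter.Tendsto (fun k : ℕ => c + 1/(φ k + 1)) Filter.atTop (nhds c) := by
          simpa using (tendsto_const_nhds (x := c)).add hinv
        exact le_of_tendsto_of_tendsto habs hb
          (Filter.Eventually.of_forall (fun k => hu1 (φ k)))
      · have hψlim : Filter.Tendsto (fun k => ψ (u (φ k))) Filter.atTop (nhds (ψ s₀)) :=
          (hψc.tendsto s₀).comp hlim
        have hb : Filter.Tendsto (fun k : ℕ => D - c + 1/(φ k + 1)) Filter.atTop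
            (nhds (D - c)) := by
          simpa using (tendsto_const_nhds (x := D - c)).add hinv
        exact le_of_tendsto_of_tendsto hψlim hb
          (Filter.Eventually.of_forall (fun k => hu2 (φ k)))
    obtain ⟨s₀, hs₀abs, hs₀⟩ := hwit
    rcases le_or_gt (ψ s₀) 0 with hzero | hpos
    · have : dist (γ s₀) y = 0 := le_antisymm hzero dist_nonneg
      exact ⟨s₀, by rwa [← dist_eq_zero]⟩
    · exfalso
      obtain ⟨δ, hδ, hopen, hiso⟩ := hloc s₀
      have hmem : γ s₀ ∈ γ '' Ioo (s₀ - δ) (s₀ + δ) :=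
        ⟨s₀, ⟨by linarith, by linarith⟩, rfl⟩
      obtain ⟨r, hr, hball⟩ := Metric.isOpen_iff.1 hopen (γ s₀) hmem
      obtain ⟨n, hn⟩ : ∃ n : ℕ, ψ s₀ / 2 ^ n < r / 2 := by
        obtain ⟨n, hn⟩ := exists_pow_lt_of_lt_one
          (show (0:ℝ) < r/2/ψ s₀ by positivity) (by norm_num : (1:ℝ)/2 < 1)
        refine ⟨n, ?_⟩
        have : (1/2:ℝ)^n * ψ s₀ < r/2/ψ s₀ * ψ s₀ := by
          exact mul_lt_mul_of_pos_right hn hpos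
        rw [div_mul_cancel₀ _ (ne_of_gt hpos)] at this
        calc ψ s₀ / 2^n = (1/2:ℝ)^n * ψ s₀ := by
              rw [div_pow]; ring
          _ < r/2 := this
      set θ := ψ s₀ / 2 ^ n with hθdef
      have hθpos : 0 < θ := by positivity
      have hc' : c + θ ∈ S := by
        refine ⟨by linarith [hcS.1], fun ε hε => ?_⟩
        set ε' := min ε (r/4) with hε'def
        have hε'pos : 0 < ε' := lt_min hε (by linarith)
        have hε'1 : ε' ≤ ε := min_le_left _ _
        have hε'2 : ε' ≤ r/4 := min_le_right _ _
        obtain ⟨z, hz1, hz2⟩ := approx_frac hX n (γ s₀) y ε' hε'pos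
        have hzball : z ∈ ball (γ s₀) r := by
          rw [mem_ball']
          calc dist (γ s₀) z ≤ θ + ε' := hz1
            _ < r := by linarith
        obtain ⟨v, hvI, hvz⟩ := hball hzball
        have hdist : dist (γ s₀) (γ v) = |s₀ - v| :=
          hiso s₀ ⟨by linarith, by linarith⟩ v hvI
        refine ⟨v, ?_, ?_⟩
        · have h1 : |v| - |s₀| ≤ |v - s₀| := abs_sub_abs_le_abs_sub v s₀
          have h2 : |v - s₀| = |s₀ - v| := abs_sub_comm v s₀
          have h3 : |s₀ - v| ≤ θ + ε' := by rw [← hdist, hvz]; exact hz1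
          linarith
        · have : ψ v = dist z y := by rw [hψdef]; simp only []; rw [hvz]
          rw [this]
          calc dist z y ≤ ψ s₀ - θ + ε' := hz2
            _ ≤ D - c - θ + ε := by linarith
            _ = D - (c + θ) + ε := by ring
      have : c + θ ≤ c := le_csSup hSbdd hc'
      linarith
  have huniv : range γ = univ := eq_univ_iff_forall.2 hmain
  exact ⟨huniv ▸ isClosed_univ, huniv⟩
end

section
/- Let (X,d) be a geodesic metric space, let x, a, b ∈ X with d(x,a) = d(x,b) and a ≠ b, and let μ₀ be any Borel probability measure on X concentrated on a set M such that every x̃ ∈ M satisfies d(x̃,a) = d(x̃,x) + d(x,a) and d(x̃,b) = d(x̃,x) + d(x,b). Let μ₁ := ½(δ_a + δ_b). Then the product plan μ₀ ⊗ μ₁ is an optimal transport plan between μ₀ and μ₁ for the quadratic cost, and if μ₀ is not a Dirac mass then μ₀ ⊗ μ₁ is not the unique optimal plan. -/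
open MeasureTheory Set ENNReal

/-- A coupling (transport plan) of `μ₀` and `μ₁`. -/
def IsCoupling {X : Type*} [MeasurableSpace X] (μ₀ μ₁ : Measure X)
    (σ : Measure (X × X)) : Prop :=
  IsProbabilityMeasure σ ∧ σ.map Prod.fst = μ₀ ∧ σ.map Prod.snd = μ₁

/-- An optimal transport plan for the quadratic cost. -/
def IsOptimalPlan {X : Type*} [MetricSpace X] [MeasurableSpace X]
    (μ₀ μ₁ : Measure X) (σ : Measure (X × X)) : Prop :=
  IsCoupling μ₀ μ₁ σ ∧
    ∀ σ' : Measure (X × X), IsCoupling μ₀ μ₁ σ' → transportCost σ ≤ transportCost σ'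

lemma dirac_of_zero_one {X : Type*} [MetricSpace X] [TopologicalSpace.SeparableSpace X]
    [MeasurableSpace X] [BorelSpace X] [Nonempty X]
    (μ : Measure X) [IsProbabilityMeasure μ]
    (h : ∀ S : Set X, MeasurableSet S → μ S = 0 ∨ μ S = 1) :
    ∃ z : X, μ = Measure.dirac z := by
  obtain ⟨u, hu⟩ := TopologicalSpace.exists_dense_seq X
  have hball : ∀ n : ℕ, ∃ k : ℕ, μ (Metric.closedBall (u k) (1 / (n + 1))) = 1 := by
    intro n
    by_contra hcon
    push_neg at hcon
    have hz : ∀ k, μ (Metric.closedBall (u k) (1 / (n + 1))) = 0 := by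
      intro k
      rcases h _ Metric.isClosed_closedBall.measurableSet with h0 | h1
      · exact h0
      · exact absurd h1 (hcon k)
    have hcover : (⋃ k, Metric.closedBall (u k) (1 / (n + 1))) = univ := by
      ext p
      simp only [mem_iUnion, mem_univ, iff_true]
      obtain ⟨k, hk⟩ := Metric.denseRange_iff.1 hu p (1 / (n + 1)) (by positivity)
      exact ⟨k, Metric.mem_closedBall.2 hk.le⟩
    have : μ univ = 0 := by
      rw [← hcover]; exact measure_iUnion_null hz
    simp [measure_univ] at this
  choose k hk using hball
  set A : Set X := ⋂ n, Metric.closedBall (u (k n)) (1 / (n + 1)) with hA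
  have hAm : MeasurableSet A :=
    MeasurableSet.iInter fun n => Metric.isClosed_closedBall.measurableSet
  have hA1 : μ A = 1 := by
    rw [← prob_compl_eq_zero_iff hAm, hA, compl_iInter]
    refine measure_iUnion_null fun n => ?_
    rw [prob_compl_eq_zero_iff Metric.isClosed_closedBall.measurableSet]
    exact hk n
  obtain ⟨z, hz⟩ := nonempty_of_measure_ne_zero (by rw [hA1]; exact one_ne_zero)
  have hsub : A = {z} := by
    refine Subset.antisymm (fun w hw => ?_) (by simpa using hz)
    have hd : ∀ n : ℕ, dist w z ≤ 2 / (n + 1) := by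
      intro n
      have h1 := mem_iInter.1 hw n
      have h2 := mem_iInter.1 hz n
      rw [Metric.mem_closedBall] at h1 h2
      calc dist w z ≤ dist w (u (k n)) + dist (u (k n)) z := dist_triangle _ _ _
        _ ≤ 1 / (n + 1) + 1 / (n + 1) := by rw [dist_comm (u (k n)) z]; exact add_le_add h1 h2
        _ = 2 / (n + 1) := by ring
    have : dist w z ≤ 0 := by
      by_contra hpos
      push_neg at hpos
      obtain ⟨n, hn⟩ := exists_nat_gt (2 / dist w z)
      have hn' : (2 : ℝ) / (n + 1) < dist w z := by
        rw [div_lt_iff₀ (by positivity)]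
        rw [div_lt_iff₀ hpos] at hn
        nlinarith [hn]
      exact absurd (hd n) (not_le.2 hn')
    exact dist_le_zero.1 this
  rw [hsub] at hA1
  refine ⟨z, Measure.ext fun S hS => ?_⟩
  rw [Measure.dirac_apply' z hS]
  by_cases hzS : z ∈ S
  · rw [indicator_of_mem hzS, Pi.one_apply]
    exact le_antisymm prob_le_one (by calc (1:ℝ≥0∞) = μ {z} := hA1.symm
      _ ≤ μ S := measure_mono (singleton_subset_iff.2 hzS))
  · rw [indicator_of_notMem hzS]
    have : μ {z}ᶜ = 0 := by
      rw [prob_compl_eq_zero_iff (measurableSet_singleton z)]; exact hA1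
    exact measure_mono_null (subset_compl_comm.1 (by simpa using hzS)) this


lemma cost_eq {X : Type*} [MetricSpace X]
    [MeasurableSpace X] [BorelSpace X]
    (x a b : X) (hab : dist x a = dist x b)
    (μ₀ : Measure X) [IsProbabilityMeasure μ₀] (M : Set X)
    (hM : μ₀ Mᶜ = 0)
    (hMa : ∀ x' ∈ M, dist x' a = dist x' x + dist x a)
    (hMb : ∀ x' ∈ M, dist x' b = dist x' x + dist x b)
    (σ : Measure (X × X))
    (hσ : IsCoupling μ₀ ((1 / 2 : ℝ≥0∞) • (Measure.dirac a + Measure.dirac b)) σ) :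
    transportCost σ = ∫⁻ x', ENNReal.ofReal (dist x' a ^ 2) ∂μ₀ := by
  obtain ⟨hp, hfst, hsnd⟩ := hσ
  set N := toMeasurable μ₀ Mᶜ with hN
  have hNm : MeasurableSet N := measurableSet_toMeasurable _ _
  have hN0 : μ₀ N = 0 := by rw [hN, measure_toMeasurable]; exact hM
  have h1 : σ (Prod.fst ⁻¹' N) = 0 := by
    rw [← Measure.map_apply measurable_fst hNm, hfst]; exact hN0
  have h2 : σ (Prod.snd ⁻¹' ({a, b} : Set X)ᶜ) = 0 := by
    rw [← Measure.map_apply measurable_snd (by measurability), hsnd]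
    simp [Measure.dirac_apply', mem_insert_iff]
  have hae : ∀ᵐ p ∂σ, ENNReal.ofReal (dist p.1 p.2 ^ 2)
      = ENNReal.ofReal (dist p.1 a ^ 2) := by
    have hae1 : ∀ᵐ p ∂σ, p.1 ∉ N := (measure_eq_zero_iff_ae_notMem).1 h1
    have hae2 : ∀ᵐ p ∂σ, p.2 ∈ ({a, b} : Set X) := by
      have := (measure_eq_zero_iff_ae_notMem).1 h2
      filter_upwards [this] with p hp using by simpa [or_iff_not_imp_left] using hp
    filter_upwards [hae1, hae2] with p hp1 hp2
    have hpM : p.1 ∈ M := by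
      by_contra hc
      exact hp1 (subset_toMeasurable μ₀ Mᶜ hc)
    rcases hp2 with h | h
    · rw [h]
    · rw [mem_singleton_iff] at h
      rw [h, hMb p.1 hpM, ← hab, ← hMa p.1 hpM]
  have hfm : Measurable fun y : X => ENNReal.ofReal (dist y a ^ 2) :=
    ENNReal.measurable_ofReal.comp (((continuous_id.dist continuous_const).pow 2).measurable)
  rw [transportCost, lintegral_congr_ae hae, ← hfst,
    lintegral_map hfm measurable_fst]

lemma alt_plan {X : Type*} [MetricSpace X] [MeasurableSpace X] [BorelSpace X]
    (μ₀ : Measure X) [IsProbabilityMeasure μ₀] (a b : X) (hne : a ≠ b)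
    (T : Set X) (hT : MeasurableSet T) (ht0 : μ₀ T ≠ 0) (ht2 : μ₀ T ≤ 1 / 2) :
    ∃ σ' : Measure (X × X),
      IsProbabilityMeasure σ' ∧
      σ'.map Prod.fst = μ₀ ∧
      σ'.map Prod.snd = (1 / 2 : ℝ≥0∞) • (Measure.dirac a + Measure.dirac b) ∧
      σ' (T ×ˢ {b}) = 0 ∧ μ₀.prod ((1 / 2 : ℝ≥0∞) • (Measure.dirac a + Measure.dirac b)) (T ×ˢ {b}) ≠ 0 := by
  set t := μ₀ T with ht
  have ht1 : t ≤ 1 := prob_le_one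
  have htlt : t ≠ ⊤ := (lt_of_le_of_lt ht1 one_lt_top).ne
  have h1t0 : (1 : ℝ≥0∞) - t ≠ 0 := by
    rw [Ne, tsub_eq_zero_iff_le]
    intro h
    exact absurd (le_trans h ht2) (by norm_num)
  have h1tt : (1 : ℝ≥0∞) - t ≠ ⊤ := (lt_of_le_of_lt tsub_le_self one_lt_top).ne
  have htc : μ₀ Tᶜ = 1 - t := by
    rw [measure_compl hT (measure_ne_top _ _), measure_univ, ht]
  set c : ℝ≥0∞ := (1 / 2 - t) / (1 - t) with hc
  set c' : ℝ≥0∞ := (1 / 2) / (1 - t) with hc'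
  set ν₂ : Measure X := c • Measure.dirac a + c' • Measure.dirac b with hν₂
  have hcfin : c ≠ ⊤ := (ENNReal.div_lt_top (tsub_le_self.trans_lt (by norm_num)).ne h1t0).ne
  have hc'fin : c' ≠ ⊤ := (ENNReal.div_lt_top (by norm_num) h1t0).ne
  have hcc' : c + c' = 1 := by
    rw [hc, hc', ENNReal.div_add_div_same]
    have : (1 / 2 - t) + 1 / 2 = 1 - t := by
      rw [ENNReal.sub_add_eq_add_sub ht2 htlt, ENNReal.add_halves]
    rw [this, ENNReal.div_self h1t0 h1tt]
  haveI : IsFiniteMeasure ν₂ := by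
    constructor
    rw [hν₂]
    simp only [Measure.add_apply, Measure.smul_apply, measure_univ, smul_eq_mul, mul_one]
    rw [hcc']; exact one_lt_top
  have hν₂univ : ν₂ univ = 1 := by
    rw [hν₂]
    simp only [Measure.add_apply, Measure.smul_apply, measure_univ, smul_eq_mul, mul_one]
    exact hcc'
  set σ' : Measure (X × X) :=
    (μ₀.restrict T).prod (Measure.dirac a) + (μ₀.restrict Tᶜ).prod ν₂ with hσ'
  have hTuniv : μ₀.restrict T univ = t := by rw [Measure.restrict_apply_univ]
  have hTcuniv : μ₀.restrict Tᶜ univ = 1 - t := by rw [Measure.restrict_apply_univ, htc]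
  refine ⟨σ', ?_, ?_, ?_, ?_, ?_⟩
  · constructor
    rw [hσ', Measure.add_apply, ← univ_prod_univ, Measure.prod_prod, Measure.prod_prod,
      hTuniv, hTcuniv, measure_univ, hν₂univ, mul_one, mul_one]
    exact add_tsub_cancel_of_le ht1
  · rw [hσ', Measure.map_add _ _ measurable_fst, Measure.map_fst_prod, Measure.map_fst_prod,
      measure_univ, hν₂univ, one_smul, one_smul, Measure.restrict_add_restrict_compl hT]
  · rw [hσ', Measure.map_add _ _ measurable_snd, Measure.map_snd_prod, Measure.map_snd_prod,
      hTuniv, hTcuniv]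
    ext S hS
    simp only [Measure.add_apply, Measure.smul_apply, smul_eq_mul, hν₂,
      Measure.add_apply, Measure.smul_apply, smul_eq_mul]
    have e1 : (1 - t) * c = 1 / 2 - t := ENNReal.mul_div_cancel h1t0 h1tt
    have e2 : (1 - t) * c' = 1 / 2 := ENNReal.mul_div_cancel h1t0 h1tt
    rw [mul_add, ← mul_assoc, ← mul_assoc, e1, e2, mul_add, ← add_assoc, ← add_mul,
      add_tsub_cancel_of_le ht2]
  · rw [hσ', Measure.add_apply, Measure.prod_prod, Measure.prod_prod]
    have hda : Measure.dirac a {b} = 0 := by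
      rw [Measure.dirac_apply' _ (measurableSet_singleton b),
        indicator_of_notMem (by simpa using hne)]
    have hrc : μ₀.restrict Tᶜ T = 0 := by
      rw [Measure.restrict_apply hT]; simp
    rw [hda, hrc, mul_zero, zero_mul, add_zero]
  · rw [Measure.prod_prod]
    have : ((1 / 2 : ℝ≥0∞) • (Measure.dirac a + Measure.dirac b)) {b} = 1 / 2 := by
      simp only [Measure.smul_apply, Measure.add_apply, smul_eq_mul]
      rw [Measure.dirac_apply' _ (measurableSet_singleton b),
        Measure.dirac_apply' _ (measurableSet_singleton b),
        indicator_of_notMem (by simpa using hne),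
        indicator_of_mem (mem_singleton b), Pi.one_apply]
      rw [zero_add, mul_one]
    rw [this]
    exact mul_ne_zero ht0 (by norm_num)

/-- in a (complete separable) geodesic metric space, let `x, a, b` with
`d(x,a) = d(x,b)`, `a ≠ b`, and let `μ₀` be concentrated on a set `M` all of whose
points `x̃` satisfy `d(x̃,a) = d(x̃,x) + d(x,a)` and `d(x̃,b) = d(x̃,x) + d(x,b)`; let
`μ₁ = ½(δ_a + δ_b)`. Then `μ₀ ⊗ μ₁` is an optimal plan, and if `μ₀` is not a Dirac
mass it is not the unique optimal plan. -/
theorem stmt_8 {X : Type*} [MetricSpace X] [TopologicalSpace.SeparableSpace X]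
    [MeasurableSpace X] [BorelSpace X]
    (hgeo : ∀ p q : X, ∃ γ : ℝ → X,
      (∀ s ∈ Icc (0 : ℝ) 1, ∀ t ∈ Icc (0 : ℝ) 1,
        dist (γ s) (γ t) = |s - t| * dist p q) ∧ γ 0 = p ∧ γ 1 = q)
    (x a b : X) (hab : dist x a = dist x b) (hne : a ≠ b)
    (μ₀ : Measure X) [IsProbabilityMeasure μ₀] (M : Set X)
    (hM : μ₀ Mᶜ = 0)
    (hMa : ∀ x' ∈ M, dist x' a = dist x' x + dist x a)
    (hMb : ∀ x' ∈ M, dist x' b = dist x' x + dist x b) :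
    IsOptimalPlan μ₀ ((1 / 2 : ℝ≥0∞) • (Measure.dirac a + Measure.dirac b))
      (μ₀.prod ((1 / 2 : ℝ≥0∞) • (Measure.dirac a + Measure.dirac b))) ∧
    ((¬∃ z : X, μ₀ = Measure.dirac z) →
      ∃ σ' : Measure (X × X),
        IsOptimalPlan μ₀ ((1 / 2 : ℝ≥0∞) • (Measure.dirac a + Measure.dirac b)) σ' ∧
        σ' ≠ μ₀.prod ((1 / 2 : ℝ≥0∞) • (Measure.dirac a + Measure.dirac b))) := by
  haveI hμ₁p : IsProbabilityMeasure ((1 / 2 : ℝ≥0∞) • (Measure.dirac a + Measure.dirac b)) := by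
    constructor
    simp only [Measure.smul_apply, Measure.add_apply, measure_univ, smul_eq_mul]
    rw [one_add_one_eq_two, ENNReal.div_mul_cancel two_ne_zero ofNat_ne_top]
  set μ₁ : Measure X := (1 / 2 : ℝ≥0∞) • (Measure.dirac a + Measure.dirac b) with hμ₁
  have hcost : ∀ σ : Measure (X × X), IsCoupling μ₀ μ₁ σ →
      transportCost σ = ∫⁻ x', ENNReal.ofReal (dist x' a ^ 2) ∂μ₀ :=
    fun σ hσ => cost_eq x a b hab μ₀ M hM hMa hMb σ hσ
  have hpc : IsCoupling μ₀ μ₁ (μ₀.prod μ₁) := by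
    refine ⟨inferInstance, ?_, ?_⟩
    · rw [Measure.map_fst_prod, measure_univ, one_smul]
    · rw [Measure.map_snd_prod, measure_univ, one_smul]
  have hopt : ∀ σ : Measure (X × X), IsCoupling μ₀ μ₁ σ → IsOptimalPlan μ₀ μ₁ σ := by
    intro σ hσ
    refine ⟨hσ, fun σ' hσ' => ?_⟩
    rw [hcost σ hσ, hcost σ' hσ']
  refine ⟨hopt _ hpc, fun hnd => ?_⟩
  haveI : Nonempty X := ⟨a⟩
  have hex : ∃ S : Set X, MeasurableSet S ∧ μ₀ S ≠ 0 ∧ μ₀ S ≠ 1 := by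
    by_contra h
    push_neg at h
    refine hnd (dirac_of_zero_one μ₀ fun S hS => ?_)
    by_cases h0 : μ₀ S = 0
    · exact Or.inl h0
    · exact Or.inr (h S hS h0)
  obtain ⟨S, hS, hS0, hS1⟩ := hex
  obtain ⟨T, hT, ht0, ht2⟩ : ∃ T : Set X, MeasurableSet T ∧ μ₀ T ≠ 0 ∧ μ₀ T ≤ 1 / 2 := by
    by_cases hle : μ₀ S ≤ 1 / 2
    · exact ⟨S, hS, hS0, hle⟩
    · refine ⟨Sᶜ, hS.compl, ?_, ?_⟩
      · rw [Ne, prob_compl_eq_zero_iff hS]; exact hS1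
      · rw [measure_compl hS (measure_ne_top _ _), measure_univ, tsub_le_iff_right]
        calc (1 : ℝ≥0∞) = 1 / 2 + 1 / 2 := (ENNReal.add_halves 1).symm
          _ ≤ 1 / 2 + μ₀ S := add_le_add_right (le_of_not_ge hle) _
  obtain ⟨σ', hσp, hσfst, hσsnd, hzero, hpos⟩ := alt_plan μ₀ a b hne T hT ht0 ht2
  refine ⟨σ', hopt σ' ⟨hσp, hσfst, hσsnd⟩, fun heq => ?_⟩
  rw [heq] at hzero
  exact hpos hzero
end

section
/- In a complete, locally compact geodesic metric space X, suppose a sequence of geodesics η^n ∈ Geo(X) and scales rₙ → 0 satisfy: in the rescaled spaces (X, d/rₙ, x) converging in the pointed Gromov–Hausdorff sense to (ℝ, |·|, 0), the rescaled curves η^n converge to a geodesic of ℝ, and there are parameters sₙ¹ < sₙ < sₙ² with d(η^n_{sₙ¹}, η^n_{sₙ}) = d(x, η^n_{sₙ}) = d(η^n_{sₙ²}, η^n_{sₙ}) = rₙ, d(η^n_{sₙ¹}, η^n_{sₙ²}) = 2rₙ, and η^n_{sₙ} → 1 in the limit. Then the limit positions of η^n_{sₙ¹} and η^n_{sₙ²}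 in ℝ are 0 and 2 (in some order); in particular one of them converges to the basepoint 0, contradicting d(η^n_{sₙⁱ}, x) ≥ rₙ for both i ∈ {1,2}. Hence no such configuration exists when Tan(X,x) = {(ℝ,0)}. -/
open Set Metric Filter

/-- in a complete, locally compact geodesic space, suppose geodesics
`η^n` and scales `rₙ → 0` are such that in the rescaled spaces `(X, d/rₙ, x)` —
converging to `(ℝ,|·|,0)` via `(1,εₙ)`-quasi-isometries `fₙ` with `fₙ(x) = 0` — the
relevant points of `η^n` converge, with parameters `sₙ¹ < sₙ < sₙ²` satisfying
`d(η^n_{sₙ¹},η^n_{sₙ}) = d(x,η^n_{sₙ}) = d(η^n_{sₙ²},η^n_{sₙ}) = rₙ`,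
`d(η^n_{sₙ¹},η^n_{sₙ²}) = 2rₙ`, `η^n_{sₙ} → 1` in the limit, and
`d(η^n_{sₙⁱ},x) ≥ rₙ` for `i ∈ {1,2}`. Then the limit positions of `η^n_{sₙ¹}` and
`η^n_{sₙ²}` would be `0` and `2` in some order, one of them converging to the
basepoint — a contradiction: no such configuration exists. -/
theorem stmt_12 {X : Type*} [MetricSpace X] [CompleteSpace X] [LocallyCompactSpace X]
    (hgeo : ∀ p q : X, ∃ γ : ℝ → X, IsGeodesic γ ∧ γ 0 = p ∧ γ 1 = q)
    (x : X) (η : ℕ → ℝ → X) (hη : ∀ n, IsGeodesic (η n))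
    (r : ℕ → ℝ) (hrpos : ∀ n, 0 < r n) (hr : Tendsto r atTop (nhds 0))
    (s s1 s2 : ℕ → ℝ)
    (hs : ∀ n, s1 n ∈ Icc (0:ℝ) 1 ∧ s n ∈ Icc (0:ℝ) 1 ∧ s2 n ∈ Icc (0:ℝ) 1)
    (hord : ∀ n, s1 n < s n ∧ s n < s2 n)
    (hd1 : ∀ n, dist (η n (s1 n)) (η n (s n)) = r n)
    (hdx : ∀ n, dist x (η n (s n)) = r n)
    (hd2 : ∀ n, dist (η n (s2 n)) (η n (s n)) = r n)
    (hd12 : ∀ n, dist (η n (s1 n)) (η n (s2 n)) = 2 * r n)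
    (hfar1 : ∀ n, dist (η n (s1 n)) x ≥ r n)
    (hfar2 : ∀ n, dist (η n (s2 n)) x ≥ r n)
    -- the rescaled spaces `(X, d/rₙ, x)` converge to `(ℝ, |·|, 0)` via
    -- `(1,εₙ)`-quasi-isometries `fₙ` defined on the ball of radius `8` around `x`
    (f : ℕ → X → ℝ) (ε : ℕ → ℝ) (hε : Tendsto ε atTop (nhds 0))
    (hfx : ∀ n, f n x = 0)
    (hqi : ∀ n, ∀ a ∈ closedBall x (8 * r n), ∀ b ∈ closedBall x (8 * r n),
      |dist (f n a) (f n b) - dist a b / r n| ≤ ε n)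
    -- the rescaled geodesics converge: the images of the marked points converge in
    -- `ℝ`, with `η^n_{sₙ} → 1`
    (hlim : Tendsto (fun n => f n (η n (s n))) atTop (nhds 1))
    (p1 p2 : ℝ)
    (hlim1 : Tendsto (fun n => f n (η n (s1 n))) atTop (nhds p1))
    (hlim2 : Tendsto (fun n => f n (η n (s2 n))) atTop (nhds p2)) :
    False := by
  -- all marked points lie in the ball of radius 8 rₙ around x
  have hmx : ∀ n, η n (s n) ∈ closedBall x (8 * r n) := by
    intro n
    have := hrpos n
    simp only [mem_closedBall, dist_comm (η n (s n)) x, hdx n]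
    linarith
  have hax : ∀ n, η n (s1 n) ∈ closedBall x (8 * r n) := by
    intro n
    have h := dist_triangle (η n (s1 n)) (η n (s n)) x
    have := hrpos n
    rw [hd1 n, dist_comm (η n (s n)) x, hdx n] at h
    simp only [mem_closedBall]
    linarith
  have hbx : ∀ n, η n (s2 n) ∈ closedBall x (8 * r n) := by
    intro n
    have h := dist_triangle (η n (s2 n)) (η n (s n)) x
    have := hrpos n
    rw [hd2 n, dist_comm (η n (s n)) x, hdx n] at h
    simp only [mem_closedBall]
    linarith
  have hxx : ∀ n, x ∈ closedBall x (8 * r n) := by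
    intro n
    have := hrpos n
    simp only [mem_closedBall, dist_self]
    linarith
  -- helper: if g → L and |g n - c| ≤ ε n then L = c
  have key : ∀ (g : ℕ → ℝ) (L c : ℝ), Tendsto g atTop (nhds L) →
      (∀ n, |g n - c| ≤ ε n) → L = c := by
    intro g L c hg h
    have h0 : Tendsto (fun n => g n - c) atTop (nhds 0) :=
      squeeze_zero_norm (fun n => by simpa [Real.norm_eq_abs] using h n) hε
    have : Tendsto g atTop (nhds c) := by
      have := h0.add_const c
      simpa using this
    exact tendsto_nhds_unique hg this
  -- |p1 - 1| = 1
  have e1 : dist p1 1 = 1 := by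
    apply key _ _ _ (hlim1.dist hlim)
    intro n
    have h := hqi n _ (hax n) _ (hmx n)
    rwa [hd1 n, div_self (hrpos n).ne'] at h
  -- |p2 - 1| = 1
  have e2 : dist p2 1 = 1 := by
    apply key _ _ _ (hlim2.dist hlim)
    intro n
    have h := hqi n _ (hbx n) _ (hmx n)
    rwa [hd2 n, div_self (hrpos n).ne'] at h
  -- |p1 - p2| = 2
  have e12 : dist p1 p2 = 2 := by
    apply key _ _ _ (hlim1.dist hlim2)
    intro n
    have h := hqi n _ (hax n) _ (hbx n)
    rwa [hd12 n, mul_div_assoc, div_self (hrpos n).ne', mul_one] at h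
  -- |p1| ≥ 1 and |p2| ≥ 1
  have ge1 : ∀ (a : ℕ → X) (p : ℝ), (∀ n, a n ∈ closedBall x (8 * r n)) →
      (∀ n, dist (a n) x ≥ r n) →
      Tendsto (fun n => f n (a n)) atTop (nhds p) → 1 ≤ |p| := by
    intro a p hball hfar ha
    have hda : Tendsto (fun n => dist (f n (a n)) (f n x)) atTop (nhds (dist p 0)) := by
      apply ha.dist
      have : (fun n => f n x) = fun _ => (0 : ℝ) := funext fun n => hfx n
      rw [this]
      exact tendsto_const_nhds
    have hlow : ∀ n, 1 - ε n ≤ dist (f n (a n)) (f n x) := by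
      intro n
      have h := hqi n _ (hball n) _ (hxx n)
      have h2 : (1 : ℝ) ≤ dist (a n) x / r n :=
        (one_le_div (hrpos n)).mpr (hfar n)
      have h3 := abs_le.mp h
      linarith [h3.1]
    have h1e : Tendsto (fun n => 1 - ε n) atTop (nhds 1) := by
      have := (tendsto_const_nhds (x := (1:ℝ)) (f := atTop)).sub hε
      simpa using this
    have := le_of_tendsto_of_tendsto' h1e hda hlow
    simpa [Real.dist_eq] using this
  have g1 : 1 ≤ |p1| := ge1 _ _ hax hfar1 hlim1
  have g2 : 1 ≤ |p2| := ge1 _ _ hbx hfar2 hlim2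
  -- conclude
  rw [Real.dist_eq] at e1 e2 e12
  rcases abs_cases p1 with ⟨h1, _⟩ | ⟨h1, _⟩ <;>
    rcases abs_cases p2 with ⟨h2, _⟩ | ⟨h2, _⟩ <;>
    rcases abs_cases (p1 - 1) with ⟨h3, _⟩ | ⟨h3, _⟩ <;>
    rcases abs_cases (p2 - 1) with ⟨h4, _⟩ | ⟨h4, _⟩ <;>
    rcases abs_cases (p1 - p2) with ⟨h5, _⟩ | ⟨h5, _⟩ <;>
    linarith
end

section
/- Let A := {(x,y) ∈ ℝ² : |x| ≤ 1/2, |y| ≤ x²} be the two-sided cusp, regarded as a subset of ℝ² with the supremum norm ‖(x,y)‖_∞ = max(|x|,|y|). Then A is weakly geodesically convex: for any two points p, q ∈ A there exists a curve in A from p to q whose length in the sup-norm equals ‖p − q‖_∞; equivalently, the intrinsic metric of A induced by the sup norm coincides with the restriction of the sup-norm metric. -/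
open Set

set_option maxHeartbeats 1000000

private lemma distPair (a b : ℝ × ℝ) : dist a b = max |a.1 - b.1| |a.2 - b.2| := by
  simp [Prod.dist_eq, Real.dist_eq]

private lemma keyLem (xe c d : ℝ) (h0 : 0 ≤ xe) (h12 : xe ≤ 1/2) (hd : 0 ≤ d)
    (hdc : d ≤ c) (hc : c ≤ xe^2) :
    0 ≤ xe - c + d ∧ d ≤ (xe - c + d)^2 := by
  constructor
  · nlinarith
  · nlinarith [sq_nonneg (1 - 2*xe), mul_nonneg (sub_nonneg.2 hdc) (sub_nonneg.2 hdc),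
      sq_nonneg (xe - c + d), mul_nonneg hd (sub_nonneg.2 hdc)]

/-- Case 1: horizontal displacement dominates. -/
private lemma case1 (p q : ℝ × ℝ) (hp1 : |p.1| ≤ 1/2) (hp2 : |p.2| ≤ p.1^2)
    (hq1 : |q.1| ≤ 1/2) (hq2 : |q.2| ≤ q.1^2) (h : |q.2 - p.2| ≤ |q.1 - p.1|) :
    ∃ γ : ℝ → ℝ × ℝ, γ 0 = p ∧ γ 1 = q ∧
      (∀ u ∈ Icc (0 : ℝ) 1, γ u ∈ {q : ℝ × ℝ | |q.1| ≤ 1 / 2 ∧ |q.2| ≤ q.1 ^ 2}) ∧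
      ∀ u ∈ Icc (0 : ℝ) 1, ∀ v ∈ Icc (0 : ℝ) 1,
        dist (γ u) (γ v) = |u - v| * dist p q := by
  obtain ⟨hp1l, hp1r⟩ := abs_le.1 hp1
  obtain ⟨hp2l, hp2r⟩ := abs_le.1 hp2
  obtain ⟨hq1l, hq1r⟩ := abs_le.1 hq1
  obtain ⟨x, hxdef⟩ : ∃ f : ℝ → ℝ, f = fun u => p.1 + u * (q.1 - p.1) := ⟨_, rfl⟩
  obtain ⟨y, hydef⟩ : ∃ f : ℝ → ℝ,
      f = fun u => max (-(x u)^2) (min ((x u)^2) (p.2 + u * (q.2 - p.2))) := ⟨_, rfl⟩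
  have hx0 : x 0 = p.1 := by simp [hxdef]
  have hx1 : x 1 = q.1 := by simp [hxdef]
  have hxuv : ∀ u v : ℝ, x u - x v = (u - v) * (q.1 - p.1) := by
    intro u v; simp only [hxdef]; ring
  have hxabs : ∀ u ∈ Icc (0:ℝ) 1, |x u| ≤ 1/2 := by
    rintro u ⟨hu0, hu1⟩
    simp only [hxdef]
    rw [abs_le]
    constructor <;> [nlinarith; nlinarith]
  refine ⟨fun u => (x u, y u), ?_, ?_, ?_, ?_⟩
  · have : y 0 = p.2 := by
      simp only [hydef]; simp only [hx0]
      rw [show p.2 + 0 * (q.2 - p.2) = p.2 from by ring]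
      rw [min_eq_right hp2r, max_eq_right hp2l]
    refine Prod.ext ?_ ?_ <;> simp [hx0, this]
  · have : y 1 = q.2 := by
      obtain ⟨hq2l, hq2r⟩ := abs_le.1 hq2
      simp only [hydef]; simp only [hx1]
      have : p.2 + 1 * (q.2 - p.2) = q.2 := by ring
      rw [this, min_eq_right hq2r, max_eq_right hq2l]
    refine Prod.ext ?_ ?_ <;> simp [hx1, this]
  · rintro u hu
    show |x u| ≤ 1/2 ∧ |y u| ≤ (x u)^2
    refine ⟨hxabs u hu, ?_⟩
    have hsq : -(x u)^2 ≤ (x u)^2 := by nlinarith [sq_nonneg (x u)]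
    simp only [hydef]
    rw [abs_le]
    exact ⟨le_max_left _ _, max_le hsq (min_le_left _ _)⟩
  · rintro u ⟨hu0, hu1⟩ v ⟨hv0, hv1⟩
    have hxd : |x u - x v| = |u - v| * |q.1 - p.1| := by
      rw [hxuv, abs_mul]
    have hxsum : |x u + x v| ≤ 1 := by
      have h1 := abs_le.1 (hxabs u ⟨hu0, hu1⟩)
      have h2 := abs_le.1 (hxabs v ⟨hv0, hv1⟩)
      rw [abs_le]; constructor <;> linarith [h1.1, h1.2, h2.1, h2.2]
    have hsqd : |(x u)^2 - (x v)^2| ≤ |u - v| * |q.1 - p.1| := by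
      have : (x u)^2 - (x v)^2 = (x u + x v) * (x u - x v) := by ring
      rw [this, abs_mul]
      calc |x u + x v| * |x u - x v| ≤ 1 * |x u - x v| :=
            mul_le_mul_of_nonneg_right hxsum (abs_nonneg _)
        _ = |u - v| * |q.1 - p.1| := by rw [one_mul, hxd]
    have hyd : |y u - y v| ≤ |u - v| * |q.1 - p.1| := by
      simp only [hydef]
      refine le_trans (abs_max_sub_max_le_max _ _ _ _) (max_le ?_ ?_)
      · have : -(x u)^2 - -(x v)^2 = -((x u)^2 - (x v)^2) := by ring
        rw [this, abs_neg]; exact hsqd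
      · refine le_trans (abs_min_sub_min_le_max _ _ _ _) (max_le hsqd ?_)
        have : p.2 + u * (q.2 - p.2) - (p.2 + v * (q.2 - p.2)) = (u - v) * (q.2 - p.2) := by ring
        rw [this, abs_mul]
        exact mul_le_mul_of_nonneg_left h (abs_nonneg _)
    have hdpq : dist p q = |q.1 - p.1| := by
      rw [distPair, abs_sub_comm p.1 q.1, abs_sub_comm p.2 q.2, max_eq_left h]
    rw [distPair, hdpq]
    show max |x u - x v| |y u - y v| = |u - v| * |q.1 - p.1|
    rw [hxd, max_eq_left hyd]

/-- Case 2 with both endpoints in the right half: vertical displacement dominates. -/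
private lemma case2pos (p q : ℝ × ℝ) (hp1 : |p.1| ≤ 1/2) (hp2 : |p.2| ≤ p.1^2)
    (hq1 : |q.1| ≤ 1/2) (hq2 : |q.2| ≤ q.1^2) (h : |q.1 - p.1| ≤ |q.2 - p.2|)
    (hp0 : 0 ≤ p.1) (hq0 : 0 ≤ q.1) :
    ∃ γ : ℝ → ℝ × ℝ, γ 0 = p ∧ γ 1 = q ∧
      (∀ u ∈ Icc (0 : ℝ) 1, γ u ∈ {q : ℝ × ℝ | |q.1| ≤ 1 / 2 ∧ |q.2| ≤ q.1 ^ 2}) ∧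
      ∀ u ∈ Icc (0 : ℝ) 1, ∀ v ∈ Icc (0 : ℝ) 1,
        dist (γ u) (γ v) = |u - v| * dist p q := by
  obtain ⟨hle1, hle2⟩ := abs_le.1 h
  obtain ⟨D, hD⟩ : ∃ d : ℝ, d = |q.2 - p.2| := ⟨_, rfl⟩
  have hD0 : 0 ≤ D := hD ▸ abs_nonneg _
  obtain ⟨x, hxdef⟩ : ∃ f : ℝ → ℝ, f = fun u => max (p.1 - u * D) (q.1 - (1 - u) * D) := ⟨_, rfl⟩
  obtain ⟨y, hydef⟩ : ∃ f : ℝ → ℝ, f = fun u => p.2 + u * (q.2 - p.2) := ⟨_, rfl⟩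
  have hx0 : x 0 = p.1 := by
    simp only [hxdef]; simp only [zero_mul, sub_zero, one_mul]
    exact max_eq_left (by linarith)
  have hx1 : x 1 = q.1 := by
    simp only [hxdef]; simp only [one_mul, sub_self, zero_mul, sub_zero]
    exact max_eq_right (by linarith)
  -- membership: for u ∈ [0,1], 0 ≤ x u ≤ 1/2 and |y u| ≤ (x u)^2
  have hmem : ∀ u ∈ Icc (0:ℝ) 1, 0 ≤ x u ∧ x u ≤ 1/2 ∧ |y u| ≤ (x u)^2 := by
    rintro u ⟨hu0, hu1⟩
    have hyu : y u = p.2 + u * (q.2 - p.2) := by simp only [hydef]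
    have hxle : x u ≤ 1/2 := by
      have h1 := (abs_le.1 hp1).2
      have h2 := (abs_le.1 hq1).2
      simp only [hxdef]
      refine max_le (by nlinarith) (by nlinarith)
    -- find a dominating endpoint tent
    have key : 0 ≤ x u ∧ |y u| ≤ (x u)^2 := by
      rcases le_total 0 (y u) with hy0 | hy0
      · -- positive side: use the endpoint with larger second coordinate
        rcases le_total (q.2 - p.2) 0 with hmono | hmono
        · -- p.2 is the larger one; |y u - p.2| = u * D
          have hc : y u ≤ p.2 := by nlinarith
          have hcd : p.2 - y u = u * D := by
            rw [hD, abs_of_nonpos hmono]; rw [hyu]; ring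
          have hk := keyLem p.1 p.2 (y u) hp0 (abs_le.1 hp1).2 hy0 hc
            (le_trans (le_abs_self _) hp2)
          have ht : p.1 - p.2 + y u = p.1 - u * D := by linarith
          rw [ht] at hk
          have hx_ge : p.1 - u * D ≤ x u := by simp only [hxdef]; exact le_max_left _ _
          refine ⟨le_trans hk.1 hx_ge, ?_⟩
          rw [abs_of_nonneg hy0]
          calc y u ≤ (p.1 - u * D)^2 := hk.2
            _ ≤ (x u)^2 := by nlinarith [hk.1, hx_ge]
        · -- q.2 is the larger one; |y u - q.2| = (1-u) * D
          have hc : y u ≤ q.2 := by nlinarith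
          have hcd : q.2 - y u = (1 - u) * D := by
            rw [hD, abs_of_nonneg hmono]; rw [hyu]; ring
          have hk := keyLem q.1 q.2 (y u) hq0 (abs_le.1 hq1).2 hy0 hc
            (le_trans (le_abs_self _) hq2)
          have ht : q.1 - q.2 + y u = q.1 - (1 - u) * D := by linarith
          rw [ht] at hk
          have hx_ge : q.1 - (1 - u) * D ≤ x u := by simp only [hxdef]; exact le_max_right _ _
          refine ⟨le_trans hk.1 hx_ge, ?_⟩
          rw [abs_of_nonneg hy0]
          calc y u ≤ (q.1 - (1 - u) * D)^2 := hk.2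
            _ ≤ (x u)^2 := by nlinarith [hk.1, hx_ge]
      · -- negative side: use the endpoint with smaller second coordinate
        rcases le_total (q.2 - p.2) 0 with hmono | hmono
        · -- q.2 is the smaller one
          have hc : -(y u) ≤ -q.2 := by nlinarith
          have hcd : -q.2 - -(y u) = (1 - u) * D := by
            rw [hD, abs_of_nonpos hmono]; rw [hyu]; ring
          have hk := keyLem q.1 (-q.2) (-(y u)) hq0 (abs_le.1 hq1).2 (by linarith) hc
            (le_trans (neg_le_abs _) hq2)
          have ht : q.1 - -q.2 + -(y u) = q.1 - (1 - u) * D := by linarith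
          rw [ht] at hk
          have hx_ge : q.1 - (1 - u) * D ≤ x u := by simp only [hxdef]; exact le_max_right _ _
          refine ⟨le_trans hk.1 hx_ge, ?_⟩
          rw [abs_of_nonpos hy0]
          calc -(y u) ≤ (q.1 - (1 - u) * D)^2 := hk.2
            _ ≤ (x u)^2 := by nlinarith [hk.1, hx_ge]
        · -- p.2 is the smaller one
          have hc : -(y u) ≤ -p.2 := by nlinarith
          have hcd : -p.2 - -(y u) = u * D := by
            rw [hD, abs_of_nonneg hmono]; rw [hyu]; ring
          have hk := keyLem p.1 (-p.2) (-(y u)) hp0 (abs_le.1 hp1).2 (by linarith) hc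
            (le_trans (neg_le_abs _) hp2)
          have ht : p.1 - -p.2 + -(y u) = p.1 - u * D := by linarith
          rw [ht] at hk
          have hx_ge : p.1 - u * D ≤ x u := by simp only [hxdef]; exact le_max_left _ _
          refine ⟨le_trans hk.1 hx_ge, ?_⟩
          rw [abs_of_nonpos hy0]
          calc -(y u) ≤ (p.1 - u * D)^2 := hk.2
            _ ≤ (x u)^2 := by nlinarith [hk.1, hx_ge]
    exact ⟨key.1, hxle, key.2⟩
  refine ⟨fun u => (x u, y u), ?_, ?_, ?_, ?_⟩
  · refine Prod.ext ?_ ?_ <;> simp [hx0, hydef]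
  · have : y 1 = q.2 := by simp only [hydef]; simp
    refine Prod.ext ?_ ?_ <;> simp [hx1, this]
  · rintro u hu
    obtain ⟨h1, h2, h3⟩ := hmem u hu
    show |x u| ≤ 1/2 ∧ |y u| ≤ (x u)^2
    exact ⟨by rw [abs_of_nonneg h1]; exact h2, h3⟩
  · rintro u hu v hv
    have hyd : |y u - y v| = |u - v| * D := by
      have : y u - y v = (u - v) * (q.2 - p.2) := by simp only [hydef]; ring
      rw [this, abs_mul, ← hD]
    have hxd : |x u - x v| ≤ |u - v| * D := by
      simp only [hxdef]
      refine le_trans (abs_max_sub_max_le_max _ _ _ _) (max_le ?_ ?_)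
      · have : p.1 - u * D - (p.1 - v * D) = (v - u) * D := by ring
        rw [this, abs_mul, abs_of_nonneg hD0, abs_sub_comm v u]
      · have : q.1 - (1 - u) * D - (q.1 - (1 - v) * D) = (u - v) * D := by ring
        rw [this, abs_mul, abs_of_nonneg hD0]
    have hdpq : dist p q = D := by
      rw [distPair, abs_sub_comm p.1 q.1, abs_sub_comm p.2 q.2, max_eq_right h, ← hD]
    rw [distPair, hdpq]
    show max |x u - x v| |y u - y v| = |u - v| * D
    rw [hyd, max_eq_right hxd]

/-- the two-sided cusp `A = {(x,y) : |x| ≤ 1/2, |y| ≤ x²}` in the plane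
with the supremum norm (which is the product metric on `ℝ × ℝ`) is weakly geodesically
convex: any two of its points are joined by a geodesic of the ambient space
(a constant-speed curve realizing the sup-norm distance) that lies entirely in `A`. -/
theorem stmt_15 :
    ∀ p ∈ {q : ℝ × ℝ | |q.1| ≤ 1 / 2 ∧ |q.2| ≤ q.1 ^ 2},
      ∀ q ∈ {q : ℝ × ℝ | |q.1| ≤ 1 / 2 ∧ |q.2| ≤ q.1 ^ 2},
        ∃ γ : ℝ → ℝ × ℝ, γ 0 = p ∧ γ 1 = q ∧
          (∀ u ∈ Icc (0 : ℝ) 1, γ u ∈ {q : ℝ × ℝ | |q.1| ≤ 1 / 2 ∧ |q.2| ≤ q.1 ^ 2}) ∧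
          ∀ u ∈ Icc (0 : ℝ) 1, ∀ v ∈ Icc (0 : ℝ) 1,
            dist (γ u) (γ v) = |u - v| * dist p q := by
  rintro p ⟨hp1, hp2⟩ q ⟨hq1, hq2⟩
  rcases le_total (|q.2 - p.2|) (|q.1 - p.1|) with h | h
  · exact case1 p q hp1 hp2 hq1 hq2 h
  · -- vertical dominates
    by_cases hpos : 0 ≤ p.1 ∧ 0 ≤ q.1
    · exact case2pos p q hp1 hp2 hq1 hq2 h hpos.1 hpos.2
    · by_cases hneg : p.1 ≤ 0 ∧ q.1 ≤ 0
      · -- reflect through the y-axis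
        set p' : ℝ × ℝ := (-p.1, p.2) with hp'
        set q' : ℝ × ℝ := (-q.1, q.2) with hq'
        have hps : p'.1 = -p.1 := rfl
        have hqs : q'.1 = -q.1 := rfl
        have h' : |q'.1 - p'.1| ≤ |q'.2 - p'.2| := by
          simp only [hp', hq']
          rw [show -q.1 - -p.1 = -(q.1 - p.1) by ring, abs_neg]
          exact h
        obtain ⟨γ, hγ0, hγ1, hγmem, hγd⟩ := case2pos p' q'
          (by show |(-p.1 : ℝ)| ≤ 1/2; rwa [abs_neg])
          (by show |p.2| ≤ (-p.1)^2; rw [neg_sq]; exact hp2)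
          (by show |(-q.1 : ℝ)| ≤ 1/2; rwa [abs_neg])
          (by show |q.2| ≤ (-q.1)^2; rw [neg_sq]; exact hq2)
          h' (by show (0:ℝ) ≤ -p.1; linarith [hneg.1]) (by show (0:ℝ) ≤ -q.1; linarith [hneg.2])
        refine ⟨fun u => (-(γ u).1, (γ u).2), ?_, ?_, ?_, ?_⟩
        · show (-(γ 0).1, (γ 0).2) = p
          rw [hγ0]; exact Prod.ext (by simp [hp']) (by simp [hp'])
        · show (-(γ 1).1, (γ 1).2) = q
          rw [hγ1]; exact Prod.ext (by simp [hq']) (by simp [hq'])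
        · intro u hu
          obtain ⟨m1, m2⟩ := hγmem u hu
          exact ⟨by show |(-(γ u).1)| ≤ 1/2; rwa [abs_neg], by show |(γ u).2| ≤ (-(γ u).1)^2; rwa [neg_sq]⟩
        · intro u hu v hv
          show dist ((-(γ u).1, (γ u).2) : ℝ × ℝ) (-(γ v).1, (γ v).2) = |u - v| * dist p q
          have h1 : dist ((-(γ u).1, (γ u).2) : ℝ × ℝ) (-(γ v).1, (γ v).2) = dist (γ u) (γ v) := by
            rw [distPair, distPair]
            show max |(-(γ u).1) - (-(γ v).1)| _ = _
            rw [show -(γ u).1 - -(γ v).1 = -((γ u).1 - (γ v).1) by ring, abs_neg]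
          have h2 : dist p' q' = dist p q := by
            rw [distPair, distPair, hp', hq']
            show max |(-p.1) - (-q.1)| _ = _
            rw [show -p.1 - -q.1 = -(p.1 - q.1) by ring, abs_neg]
          rw [h1, hγd u hu v hv, h2]
      ·
        have hmix : |q.2 - p.2| ≤ |q.1 - p.1| := by
          have hsq : p.1^2 ≤ |p.1| * (1/2) := by
            rw [← sq_abs]; nlinarith [abs_nonneg p.1]
          have hsq' : q.1^2 ≤ |q.1| * (1/2) := by
            rw [← sq_abs]; nlinarith [abs_nonneg q.1]
          have habs : |q.2 - p.2| ≤ |q.2| + |p.2| := abs_sub _ _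
          rcases lt_or_ge p.1 0 with hP | hP
          · have hQ : 0 < q.1 := by
              by_contra hQ'; push_neg at hQ'; exact hneg ⟨le_of_lt hP, hQ'⟩
            have : |q.1 - p.1| = q.1 - p.1 := abs_of_pos (by linarith)
            rw [this]
            rw [abs_of_neg hP] at hsq
            rw [abs_of_pos hQ] at hsq'
            nlinarith [hp2, hq2, habs]
          · have hQ : q.1 < 0 := by
              by_contra hQ'; push_neg at hQ'; exact hpos ⟨hP, hQ'⟩
            have : |q.1 - p.1| = p.1 - q.1 := by rw [abs_sub_comm]; exact abs_of_pos (by linarith)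
            rw [this]
            rw [abs_of_nonneg hP] at hsq
            rw [abs_of_neg hQ] at hsq'
            nlinarith [hp2, hq2, habs]
        exact case1 p q hp1 hp2 hq1 hq2 hmix
end
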